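/- arXiv:2107.03211 — 3 statements merged into one kernel-verified Lean document; each statement's English description precedes it below -/
import Mathlib

section
/- If X and Y are infinite compact Hausdorff spaces, then C_p(X×Y) is not isomorphic (linearly homeomorphic) to C_p(X, C_p(Y)). -/
open Filter Topology

set_option linter.unusedVariables false

/-- `C_p(X, E)`: the submodule of `X → E` (with the product, i.e. pointwise, topology)
consisting of all continuous functions from `X` to `E`.  The coerced type `↥(Cp X E)` carries
the subspace topology, i.e. the topology of pointwise convergence. -/
def Cp (X E : Type*) [TopologicalSpace X] [TopologicalSpace E]
    [AddCommGroup E] [Module ℝ E] [ContinuousAdd E] [ContinuousSMul ℝ E] :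
    Submodule ℝ (X → E) where
  carrier := {f | Continuous f}
  add_mem' hf hg := hf.add hg
  zero_mem' := continuous_const
  smul_mem' c f hf := hf.const_smul c

/-- `(c₀)_p`: the space of real sequences converging to `0`, as a submodule of `ℕ → ℝ`;
the coerced type carries the topology of pointwise convergence inherited from `ℝ^ℕ`. -/
def c0p : Submodule ℝ (ℕ → ℝ) where
  carrier := {x | Tendsto x atTop (𝓝 0)}
  add_mem' hx hy := by
    have h := Filter.Tendsto.add hx hy
    rw [add_zero] at h
    exact h
  zero_mem' := tendsto_const_nhds
  smul_mem' c x hx := by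
    have h := Filter.Tendsto.const_smul hx c
    rw [smul_zero] at h
    exact h

/-- A topological vector space `E` contains a complemented copy of `F`: there is a closed
linear subspace `E₁` of `E` which is linearly homeomorphic to `F` and a continuous linear
projection from `E` onto `E₁`. -/
def HasComplementedCopy (E : Type*) [TopologicalSpace E] [AddCommGroup E] [Module ℝ E]
    (F : Type*) [TopologicalSpace F] [AddCommGroup F] [Module ℝ F] : Prop :=
  ∃ E₁ : Submodule ℝ E, IsClosed (E₁ : Set E) ∧ Nonempty (E₁ ≃L[ℝ] F) ∧
    ∃ P : E →L[ℝ] E, Set.range P = (E₁ : Set E) ∧ ∀ x ∈ E₁, P x = x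

/-- A function `f : X × Y → ℝ` is separately continuous. -/
def SepCont {X Y : Type*} [TopologicalSpace X] [TopologicalSpace Y] (f : X × Y → ℝ) : Prop :=
  (∀ x, Continuous fun y => f (x, y)) ∧ (∀ y, Continuous fun x => f (x, y))

/-- `SC_p(X × Y)`: the submodule of `X × Y → ℝ` consisting of all separately continuous
functions; the coerced type carries the topology of pointwise convergence. -/
def SCp (X Y : Type*) [TopologicalSpace X] [TopologicalSpace Y] : Submodule ℝ (X × Y → ℝ) where
  carrier := {f | SepCont f}
  add_mem' hf hg := ⟨fun x => (hf.1 x).add (hg.1 x), fun y => (hf.2 y).add (hg.2 y)⟩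
  zero_mem' := ⟨fun _ => continuous_const, fun _ => continuous_const⟩
  smul_mem' c f hf := ⟨fun x => (hf.1 x).const_smul c, fun y => (hf.2 y).const_smul c⟩

/-- The topology `σ` on `X × Y`: the coarsest topology making every separately continuous
real-valued function on `X × Y` continuous. -/
def sigmaTop (X Y : Type*) [TopologicalSpace X] [TopologicalSpace Y] :
    TopologicalSpace (X × Y) :=
  ⨅ f : {f : X × Y → ℝ // SepCont f}, TopologicalSpace.induced f.1 inferInstance

/-- The action of a finite linear combination `μ = Σ_z μ(z)·δ_z` of Dirac functionals
on a function `f`. -/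
noncomputable def finComboApply {Z : Type*} (μ : Z →₀ ℝ) (f : Z → ℝ) : ℝ :=
  μ.sum fun z a => a * f z

/-- `μ` is a JN-sequence on the topological space `Z`: each `μ n` is a finite linear
combination of Dirac functionals of norm `Σ_z |μ n z| = 1`, and `μ n (f) → 0` for every
continuous `f : Z → ℝ`. -/
def IsJNSeq (Z : Type*) [TopologicalSpace Z] (μ : ℕ → Z →₀ ℝ) : Prop :=
  (∀ n, ((μ n).sum fun _ a => |a|) = 1) ∧
    ∀ f : Z → ℝ, Continuous f → Tendsto (fun n => finComboApply (μ n) f) atTop (𝓝 0)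

/-- `Z` admits a JN-sequence. -/
def HasJNSeq (Z : Type*) [TopologicalSpace Z] : Prop := ∃ μ, IsJNSeq Z μ

/-- A space is pseudocompact if every continuous real-valued function on it is bounded. -/
def Pseudocompact (Z : Type*) [TopologicalSpace Z] : Prop :=
  ∀ f : Z → ℝ, Continuous f → Bornology.IsBounded (Set.range f)

/-- The action of a finite linear combination `Σ_{(x,y)} ν(x,y)·(δ_x ⊗ δ_y)` of tensor
products of Dirac functionals on an element of `C_p(X, C_p(Y))`. -/
noncomputable def tensorApply {X Y : Type*} [TopologicalSpace X] [TopologicalSpace Y]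
    (ν : (X × Y) →₀ ℝ) (f : ↥(Cp X ↥(Cp Y ℝ))) : ℝ :=
  ν.sum fun p a => a * (f.1 p.1).1 p.2

section Aux

/-- In an infinite compact Hausdorff space there is a sequence of continuous "bump"
functions with pairwise disjoint supports, each taking the value `1` somewhere. -/
theorem exists_bump_family (Z : Type*) [TopologicalSpace Z] [CompactSpace Z] [T2Space Z]
    [Infinite Z] :
    ∃ (p : ℕ → Z) (u : ℕ → Z → ℝ), (∀ n, Continuous (u n)) ∧ (∀ n, u n (p n) = 1) ∧
      (∀ m n z, m ≠ n → u m z ≠ 0 → u n z = 0) := by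
  classical
  -- find an accumulation point
  have hz : ∃ z : Z, ∀ W : Set Z, IsOpen W → z ∈ W → ∃ w ∈ W, w ≠ z := by
    by_contra h
    push_neg at h
    have hsing : ∀ a : Z, IsOpen ({a} : Set Z) := by
      intro a
      obtain ⟨W, hWo, haW, hW⟩ := h a
      have : W = {a} := Set.eq_singleton_iff_unique_mem.2 ⟨haW, hW⟩
      rwa [← this]
    have : DiscreteTopology Z := discreteTopology_iff_isOpen_singleton.mpr hsing
    have hfin : Finite Z := finite_of_compact_of_discrete
    exact not_finite Z
  obtain ⟨z, hz⟩ := hz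
  -- one step of the recursion
  have key : ∀ W : Set Z, IsOpen W → z ∈ W →
      ∃ (x : Z) (U W' : Set Z), IsOpen U ∧ IsOpen W' ∧ x ∈ U ∧ z ∈ W' ∧ U ⊆ W ∧ W' ⊆ W ∧
        Disjoint U W' := by
    intro W hWo hzW
    obtain ⟨w, hwW, hwz⟩ := hz W hWo hzW
    obtain ⟨A, B, hA, hB, hwA, hzB, hAB⟩ := t2_separation hwz
    exact ⟨w, A ∩ W, B ∩ W, hA.inter hWo, hB.inter hWo, ⟨hwA, hwW⟩, ⟨hzB, hzW⟩,
      Set.inter_subset_right, Set.inter_subset_right,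
      hAB.mono Set.inter_subset_left Set.inter_subset_left⟩
  choose xf Uf Wf hUo hWo hxU hzW hUW hWW hdisj using key
  -- the recursively defined decreasing sequence of neighborhoods of `z`
  let WS : ℕ → {W : Set Z // IsOpen W ∧ z ∈ W} := fun n =>
    Nat.rec ⟨Set.univ, isOpen_univ, Set.mem_univ z⟩
      (fun _ q => ⟨Wf q.1 q.2.1 q.2.2, hWo q.1 q.2.1 q.2.2, hzW q.1 q.2.1 q.2.2⟩) n
  let p : ℕ → Z := fun n => xf (WS n).1 (WS n).2.1 (WS n).2.2
  let U : ℕ → Set Z := fun n => Uf (WS n).1 (WS n).2.1 (WS n).2.2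
  have hWSsucc : ∀ n, (WS (n + 1)).1 ⊆ (WS n).1 := fun n => hWW _ _ _
  have hWSmono : ∀ m n, m ≤ n → (WS n).1 ⊆ (WS m).1 := by
    intro m n hmn
    induction hmn with
    | refl => exact subset_rfl
    | step h ih => exact (hWSsucc _).trans ih
  have hdis : ∀ m n, m < n → Disjoint (U m) (U n) := by
    intro m n hmn
    have h1 : U n ⊆ (WS n).1 := hUW _ _ _
    have h2 : (WS n).1 ⊆ (WS (m + 1)).1 := hWSmono _ _ hmn
    have h3 : Disjoint (U m) ((WS (m + 1)).1) := hdisj (WS m).1 (WS m).2.1 (WS m).2.2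
    exact h3.mono_right (h1.trans h2)
  -- Urysohn bumps
  have bump : ∀ n, ∃ u : Z → ℝ, Continuous u ∧ u (p n) = 1 ∧ ∀ w, w ∉ U n → u w = 0 := by
    intro n
    have hUopen : IsOpen (U n) := hUo _ _ _
    have hdisj2 : Disjoint ((U n)ᶜ) ({p n} : Set Z) := by
      rw [Set.disjoint_left]
      intro a ha hap
      rw [Set.mem_singleton_iff] at hap
      exact ha (hap ▸ hxU (WS n).1 (WS n).2.1 (WS n).2.2)
    obtain ⟨f, hf0, hf1, _⟩ := exists_continuous_zero_one_of_isClosed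
      (isClosed_compl_iff.2 hUopen) isClosed_singleton hdisj2
    exact ⟨f, f.continuous, hf1 rfl, fun w hw => hf0 hw⟩
  choose u hu hup hu0 using bump
  refine ⟨p, u, hu, hup, ?_⟩
  intro m n w hmn hm
  have hwUm : w ∈ U m := by
    by_contra h
    exact hm (hu0 m w h)
  have hwUn : w ∉ U n := by
    intro h
    rcases hmn.lt_or_gt with h1 | h1
    · exact Set.disjoint_left.mp (hdis m n h1) hwUm h
    · exact Set.disjoint_left.mp (hdis n m h1) h hwUm
  exact hu0 n w hwUn

end Aux

section Aux2

variable {ι : Type*} [TopologicalSpace ι]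

/-- Any pointwise continuous, `ℝ`-homogeneous functional on `C_p(ι)` is bounded on
sup-norm balls. -/
theorem bound_on_ball (φ : ↥(Cp ι ℝ) → ℝ) (hφc : Continuous φ)
    (hφs : ∀ (c : ℝ) (f : ↥(Cp ι ℝ)), φ (c • f) = c * φ f) (n : ℕ) :
    ∃ M : ℝ, ∀ f : ↥(Cp ι ℝ), (∀ q, |(f : ι → ℝ) q| ≤ (n : ℝ)) → |φ f| ≤ M := by
  classical
  have hφ0 : φ 0 = 0 := by
    have := hφs 0 0
    simpa using this
  have hS : φ ⁻¹' Metric.ball 0 1 ∈ 𝓝 (0 : ↥(Cp ι ℝ)) := by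
    apply hφc.continuousAt.preimage_mem_nhds
    rw [hφ0]
    exact Metric.ball_mem_nhds _ one_pos
  rw [mem_nhds_subtype] at hS
  obtain ⟨W, hW, hWS⟩ := hS
  have hW0 : W ∈ 𝓝 (0 : ι → ℝ) := by simpa using hW
  rw [nhds_pi, Filter.mem_pi] at hW0
  obtain ⟨I, hIfin, t, ht, hsub⟩ := hW0
  choose ε hε hball using fun i => Metric.mem_nhds_iff.mp (ht i)
  obtain ⟨δ, hδ, hδle⟩ : ∃ δ > 0, ∀ i ∈ I, δ ≤ ε i := by
    rcases Set.eq_empty_or_nonempty I with hI | hI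
    · exact ⟨1, one_pos, by simp [hI]⟩
    · have hne : hIfin.toFinset.Nonempty := by
        rwa [Set.Finite.toFinset_nonempty]
      refine ⟨hIfin.toFinset.inf' hne ε, ?_, ?_⟩
      · rw [gt_iff_lt, Finset.lt_inf'_iff]
        intro i hi
        exact hε i
      · intro i hi
        exact Finset.inf'_le ε (by rwa [Set.Finite.mem_toFinset])
  set c : ℝ := δ / ((n : ℝ) + 1) with hcdef
  have hc : 0 < c := div_pos hδ (by positivity)
  refine ⟨1 / c, ?_⟩
  intro f hf
  have hmem : c • f ∈ φ ⁻¹' Metric.ball 0 1 := by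
    apply hWS
    apply hsub
    intro i hi
    apply hball i
    have h1 : |c * (f : ι → ℝ) i| ≤ c * (n : ℝ) := by
      rw [abs_mul, abs_of_pos hc]
      exact mul_le_mul_of_nonneg_left (hf i) hc.le
    have h2 : c * (n : ℝ) < δ := by
      rw [hcdef, div_mul_eq_mul_div, div_lt_iff₀ (by positivity)]
      nlinarith [hδ]
    have h3 : |c * (f : ι → ℝ) i| < ε i := lt_of_le_of_lt h1 (h2.trans_le (hδle i hi))
    simp only [Metric.mem_ball, Real.dist_eq, Pi.zero_apply, sub_zero, Submodule.coe_smul,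
      Pi.smul_apply, smul_eq_mul]
    exact h3
  have h4 : |φ (c • f)| < 1 := by
    simpa only [Set.mem_preimage, Metric.mem_ball, Real.dist_eq, sub_zero] using hmem
  rw [hφs, abs_mul, abs_of_pos hc] at h4
  have h5 : |φ f| < 1 / c := by
    rw [lt_div_iff₀ hc, mul_comm]
    exact h4
  exact h5.le

end Aux2

/-- If `X` and `Y` are infinite compact Hausdorff spaces, then
`C_p(X×Y)` is not linearly homeomorphic to `C_p(X, C_p(Y))`. -/


theorem statement6 (X Y : Type*) [TopologicalSpace X] [CompactSpace X] [T2Space X]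
    [Infinite X] [TopologicalSpace Y] [CompactSpace Y] [T2Space Y] [Infinite Y] :
    ¬ Nonempty (↥(Cp (X × Y) ℝ) ≃L[ℝ] ↥(Cp X ↥(Cp Y ℝ))) := by
  rintro ⟨e⟩
  obtain ⟨xp, u, hu, hup, hud⟩ := exists_bump_family X
  obtain ⟨yp, v, hv, hvp, hvd⟩ := exists_bump_family Y
  -- bounds for the functionals `f ↦ (e f) (xp n) (yp n)` on the sup-norm `n`-balls
  have hM : ∀ n : ℕ, ∃ M : ℝ, ∀ f : ↥(Cp (X × Y) ℝ),
      (∀ q, |(f : (X × Y) → ℝ) q| ≤ (n : ℝ)) →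
        |(((e f : ↥(Cp X ↥(Cp Y ℝ))) : X → ↥(Cp Y ℝ)) (xp n) : Y → ℝ) (yp n)| ≤ M := by
    intro n
    refine bound_on_ball
      (fun f => (((e f : ↥(Cp X ↥(Cp Y ℝ))) : X → ↥(Cp Y ℝ)) (xp n) : Y → ℝ) (yp n)) ?_ ?_ n
    · exact ((continuous_apply (yp n)).comp continuous_subtype_val).comp
        (((continuous_apply (xp n)).comp continuous_subtype_val).comp e.continuous)
    · intro c f
      show (((e (c • f) : ↥(Cp X ↥(Cp Y ℝ))) : X → ↥(Cp Y ℝ)) (xp n) : Y → ℝ) (yp n)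
        = c * (((e f : ↥(Cp X ↥(Cp Y ℝ))) : X → ↥(Cp Y ℝ)) (xp n) : Y → ℝ) (yp n)
      rw [map_smul]
      simp
  choose M hM using hM
  set cc : ℕ → ℝ := fun n => |M n| + 1 with hccdef
  have hccpos : ∀ n, 0 < cc n := fun n => by positivity
  -- the escaping element of `C_p(X, C_p(Y))`
  set fxy : X → Y → ℝ := fun a b => ∑' k, cc k * u k a * v k b with hfxy
  have husingle : ∀ (k0 : ℕ) (a : X), u k0 a ≠ 0 → ∀ m, m ≠ k0 → u m a = 0 := by
    intro k0 a h m hm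
    by_contra hma
    exact h (hud m k0 a hm hma)
  have hvsingle : ∀ (k0 : ℕ) (b : Y), v k0 b ≠ 0 → ∀ m, m ≠ k0 → v m b = 0 := by
    intro k0 b h m hm
    by_contra hmb
    exact h (hvd m k0 b hm hmb)
  have hsec1 : ∀ a, Continuous (fxy a) := by
    intro a
    by_cases h : ∃ k, u k a ≠ 0
    · obtain ⟨k0, hk0⟩ := h
      have heq : fxy a = fun b => cc k0 * u k0 a * v k0 b := by
        funext b
        simp only [hfxy]
        refine tsum_eq_single k0 (fun m hm => ?_)
        rw [husingle k0 a hk0 m hm]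
        ring
      rw [heq]
      exact continuous_const.mul (hv k0)
    · push_neg at h
      have heq : fxy a = fun _ => 0 := by
        funext b
        simp [hfxy, h]
      rw [heq]
      exact continuous_const
  have hsec2 : ∀ b, Continuous (fun a => fxy a b) := by
    intro b
    by_cases h : ∃ k, v k b ≠ 0
    · obtain ⟨k0, hk0⟩ := h
      have heq : (fun a => fxy a b) = fun a => cc k0 * u k0 a * v k0 b := by
        funext a
        simp only [hfxy]
        refine tsum_eq_single k0 (fun m hm => ?_)
        rw [hvsingle k0 b hk0 m hm, mul_zero]
      rw [heq]
      exact (continuous_const.mul (hu k0)).mul continuous_const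
    · push_neg at h
      have heq : (fun a => fxy a b) = fun _ => 0 := by
        funext a
        simp [hfxy, h]
      rw [heq]
      exact continuous_const
  have hval : ∀ n, fxy (xp n) (yp n) = cc n := by
    intro n
    have h1 : fxy (xp n) (yp n) = cc n * u n (xp n) * v n (yp n) := by
      simp only [hfxy]
      refine tsum_eq_single n (fun m hm => ?_)
      have hm0 : u m (xp n) = 0 := by
        by_contra hma
        have h2 := hud m n (xp n) hm hma
        rw [hup n] at h2
        norm_num at h2
      rw [hm0]
      ring
    rw [h1, hup, hvp]
    ring
  have hmemY : ∀ a, fxy a ∈ Cp Y ℝ := fun a => hsec1 a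
  have hFcont : Continuous (fun a => (⟨fxy a, hmemY a⟩ : ↥(Cp Y ℝ))) :=
    Continuous.subtype_mk (continuous_pi fun b => hsec2 b) hmemY
  have hFmem : (fun a => (⟨fxy a, hmemY a⟩ : ↥(Cp Y ℝ))) ∈ Cp X ↥(Cp Y ℝ) := hFcont
  let F : ↥(Cp X ↥(Cp Y ℝ)) := ⟨fun a => ⟨fxy a, hmemY a⟩, hFmem⟩
  set g : ↥(Cp (X × Y) ℝ) := e.symm F with hg
  have hgc : Continuous ((g : ↥(Cp (X × Y) ℝ)) : (X × Y) → ℝ) := g.2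
  obtain ⟨C, hC⟩ := isBounded_iff_forall_norm_le.mp (isCompact_range hgc).isBounded
  set n : ℕ := ⌈C⌉₊ with hn
  have hgball : ∀ q, |(g : (X × Y) → ℝ) q| ≤ (n : ℝ) := by
    intro q
    have h1 : ‖(g : (X × Y) → ℝ) q‖ ≤ C := hC _ (Set.mem_range_self q)
    have h2 : C ≤ (n : ℝ) := Nat.le_ceil C
    calc |(g : (X × Y) → ℝ) q| = ‖(g : (X × Y) → ℝ) q‖ := (Real.norm_eq_abs _).symm
      _ ≤ C := h1
      _ ≤ (n : ℝ) := h2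
  have hbound := hM n g hgball
  have hegF : e g = F := by
    rw [hg]
    exact e.apply_symm_apply F
  rw [hegF] at hbound
  replace hbound : |fxy (xp n) (yp n)| ≤ M n := hbound
  rw [hval n] at hbound
  rw [abs_of_pos (hccpos n)] at hbound
  have h8 : |M n| + 1 ≤ M n := by simpa [hccdef] using hbound
  have h9 := le_abs_self (M n)
  linarith
end

section
/- Let E be a real normed space and X a nonempty Tychonoff space. Then the topology of pointwise convergence on C_p(X,E) coincides with the weak topology of the topological vector space C_p(X,E) (the topology σ(C_p(X,E), C_p(X,E)') induced by its topological dual) if and only if E is finite-dimensional. -/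
open Filter Topology

set_option linter.unusedVariables false

/-- For a real normed space `E` and a nonempty Tychonoff space `X`,
the topology of pointwise convergence on `C_p(X,E)` coincides with the weak topology
`σ(C_p(X,E), C_p(X,E)')` induced by its topological dual if and only if `E` is
finite-dimensional. -/
theorem statement7 (X : Type*) [TopologicalSpace X] [T35Space X] [Nonempty X]
    (E : Type*) [NormedAddCommGroup E] [NormedSpace ℝ E] :
    (⨅ φ : ↥(Cp X E) →L[ℝ] ℝ, TopologicalSpace.induced (fun f => φ f) inferInstance)
        = (inferInstance : TopologicalSpace ↥(Cp X E))
      ↔ FiniteDimensional ℝ E := by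
  constructor
  · intro hT
    obtain ⟨x₀⟩ := ‹Nonempty X›
    have hcont : Continuous fun f : ↥(Cp X E) => f.1 x₀ :=
      (continuous_apply x₀).comp continuous_subtype_val
    set U : Set ↥(Cp X E) := {f | ‖f.1 x₀‖ < 1} with hU
    have hUopen : IsOpen U := by
      have h : U = (fun f : ↥(Cp X E) => ‖f.1 x₀‖) ⁻¹' Set.Iio 1 := rfl
      rw [h]
      exact (continuous_norm.comp hcont).isOpen_preimage _ isOpen_Iio
    have hU0 : (0 : ↥(Cp X E)) ∈ U := by
      simp only [hU, Set.mem_setOf_eq]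
      have : ((0 : ↥(Cp X E)) : X → E) x₀ = 0 := rfl
      rw [this, norm_zero]; norm_num
    have hmem : U ∈ @nhds _ (⨅ φ : ↥(Cp X E) →L[ℝ] ℝ,
        TopologicalSpace.induced (fun f => φ f) inferInstance) 0 := by
      rw [hT]; exact hUopen.mem_nhds hU0
    rw [_root_.nhds_iInf] at hmem
    obtain ⟨I, hIfin, V, hV, hUeq⟩ := Filter.mem_iInf.mp hmem
    have key : ∀ f : ↥(Cp X E), (∀ i : I, (i : ↥(Cp X E) →L[ℝ] ℝ) f = 0) → f.1 x₀ = 0 := by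
      intro f hf
      have hsm : ∀ t : ℝ, t • f ∈ U := by
        intro t
        rw [hUeq, Set.mem_iInter]
        intro i
        have hVi := hV i
        rw [nhds_induced] at hVi
        obtain ⟨W, hW, hWsub⟩ := Filter.mem_comap.mp hVi
        apply hWsub
        have hz : (i : ↥(Cp X E) →L[ℝ] ℝ) (t • f) = 0 := by
          rw [map_smul, hf i, smul_zero]
        simp only [Set.mem_preimage, hz]
        have h0 : (i : ↥(Cp X E) →L[ℝ] ℝ) (0 : ↥(Cp X E)) = 0 := map_zero _
        rw [h0] at hW
        exact mem_of_mem_nhds hW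
      by_contra hne
      have hpos : 0 < ‖f.1 x₀‖ := by
        rw [norm_pos_iff]; exact hne
      have h2 := hsm (2 / ‖f.1 x₀‖)
      simp only [hU, Set.mem_setOf_eq] at h2
      have hcoe : (((2 / ‖f.1 x₀‖) • f : ↥(Cp X E)) : X → E) x₀ = (2 / ‖f.1 x₀‖) • f.1 x₀ := rfl
      rw [hcoe, norm_smul, Real.norm_eq_abs, abs_of_pos (by positivity),
        div_mul_cancel₀] at h2
      · norm_num at h2
      · exact ne_of_gt hpos
    haveI : Finite ↥I := hIfin.to_subtype
    let constLM : E →ₗ[ℝ] ↥(Cp X E) :=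
      { toFun := fun a => ⟨fun _ => a, continuous_const⟩
        map_add' := fun a b => rfl
        map_smul' := fun c a => rfl }
    let L : E →ₗ[ℝ] (I → ℝ) := LinearMap.pi fun i : I =>
      ((i : ↥(Cp X E) →L[ℝ] ℝ) : ↥(Cp X E) →ₗ[ℝ] ℝ).comp constLM
    have hLinj : Function.Injective L := by
      rw [← LinearMap.ker_eq_bot, LinearMap.ker_eq_bot']
      intro a ha
      have h := key (constLM a) (fun i => by
        have := congrFun ha i
        exact this)
      exact h
    exact FiniteDimensional.of_injective L hLinj
  · intro hFD
    let b := Module.finBasis ℝ E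
    let e : E ≃L[ℝ] (Fin (Module.finrank ℝ E) → ℝ) := b.equivFunL
    refine le_antisymm ?_ (le_iInf fun φ => continuous_iff_le_induced.mp φ.continuous)
    have hE : (inferInstance : TopologicalSpace E)
        = ⨅ i, TopologicalSpace.induced (fun v : E => e v i) inferInstance := by
      have hPi : (Pi.topologicalSpace : TopologicalSpace (Fin (Module.finrank ℝ E) → ℝ))
          = ⨅ i, TopologicalSpace.induced (fun g : Fin (Module.finrank ℝ E) → ℝ => g i)
              inferInstance := rfl
      calc (inferInstance : TopologicalSpace E)
          = TopologicalSpace.induced (⇑e.toHomeomorph) Pi.topologicalSpace :=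
            (e.toHomeomorph.induced_eq).symm
        _ = TopologicalSpace.induced (⇑e.toHomeomorph)
              (⨅ i, TopologicalSpace.induced
                (fun g : Fin (Module.finrank ℝ E) → ℝ => g i) inferInstance) :=
            congrArg _ hPi
        _ = ⨅ i, TopologicalSpace.induced (⇑e.toHomeomorph)
              (TopologicalSpace.induced
                (fun g : Fin (Module.finrank ℝ E) → ℝ => g i) inferInstance) := induced_iInf
        _ = ⨅ i, TopologicalSpace.induced (fun v : E => e v i) inferInstance :=
            iInf_congr fun i => induced_compose
    let ψ : X → Fin (Module.finrank ℝ E) → (↥(Cp X E) →L[ℝ] ℝ) := fun x i =>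
      { toFun := fun f => e (f.1 x) i
        map_add' := fun f g => by
          have h : ((f + g : ↥(Cp X E)) : X → E) x = f.1 x + g.1 x := rfl
          simp [h]
        map_smul' := fun c f => by
          have h : ((c • f : ↥(Cp X E)) : X → E) x = c • f.1 x := rfl
          simp [h]
        cont := (continuous_apply i).comp (e.continuous.comp
          ((continuous_apply x).comp continuous_subtype_val)) }
    have hmain : (inferInstance : TopologicalSpace ↥(Cp X E))
        = ⨅ x : X, ⨅ i, TopologicalSpace.induced
            (fun f : ↥(Cp X E) => e (f.1 x) i) inferInstance := by
      calc (inferInstance : TopologicalSpace ↥(Cp X E))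
          = TopologicalSpace.induced (Subtype.val)
              (⨅ x, TopologicalSpace.induced (fun g : X → E => g x) inferInstance) := rfl
        _ = ⨅ x, TopologicalSpace.induced (Subtype.val)
              (TopologicalSpace.induced (fun g : X → E => g x) inferInstance) := induced_iInf
        _ = ⨅ x, TopologicalSpace.induced (fun f : ↥(Cp X E) => f.1 x) inferInstance :=
            iInf_congr fun x => induced_compose
        _ = ⨅ x, TopologicalSpace.induced (fun f : ↥(Cp X E) => f.1 x)
              (⨅ i, TopologicalSpace.induced (fun v : E => e v i) inferInstance) :=
            iInf_congr fun x => congrArg _ hE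
        _ = ⨅ x, ⨅ i, TopologicalSpace.induced (fun f : ↥(Cp X E) => f.1 x)
              (TopologicalSpace.induced (fun v : E => e v i) inferInstance) :=
            iInf_congr fun x => induced_iInf
        _ = ⨅ x : X, ⨅ i, TopologicalSpace.induced
              (fun f : ↥(Cp X E) => e (f.1 x) i) inferInstance :=
            iInf_congr fun x => iInf_congr fun i => induced_compose
    rw [hmain]
    refine le_iInf fun x => le_iInf fun i => ?_
    exact iInf_le (fun φ : ↥(Cp X E) →L[ℝ] ℝ =>
      TopologicalSpace.induced (fun f => φ f) inferInstance) (ψ x i)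
end

section
/- Let X be an infinite Tychonoff space and κ an infinite cardinal number. Then the product space C_p(X)^κ (endowed with the product topology) contains a complemented copy of (c_0)_p if and only if C_p(X) contains a complemented copy of (c_0)_p. -/
open Filter Topology

set_option linter.unusedVariables false

section FactorsChar

variable {E : Type*} [TopologicalSpace E] [AddCommGroup E] [Module ℝ E]

/-- `(c₀)_p` "factors through" `E`: there are continuous linear maps `R : E → c₀` and
`J : c₀ → E` with `R ∘ J = id`. -/
def FactorsC0 (E : Type*) [TopologicalSpace E] [AddCommGroup E] [Module ℝ E] : Prop :=
  ∃ (R : E →L[ℝ] ↥c0p) (J : ↥c0p →L[ℝ] E), ∀ x, R (J x) = x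

theorem hasComplementedCopy_of_factors [T2Space E] (h : FactorsC0 E) :
    HasComplementedCopy E ↥c0p := by
  obtain ⟨R, J, hRJ⟩ := h
  refine ⟨LinearMap.range (J : ↥c0p →ₗ[ℝ] E), ?_, ?_, ?_⟩
  · have hset : (LinearMap.range (J : ↥c0p →ₗ[ℝ] E) : Set E) = {x | J (R x) = x} := by
      ext x
      constructor
      · rintro ⟨y, rfl⟩
        show J (R (J y)) = J y
        rw [hRJ]
      · intro hx
        exact ⟨R x, hx⟩
    rw [hset]
    exact isClosed_eq (J.continuous.comp R.continuous) continuous_id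
  · refine ⟨ContinuousLinearEquiv.equivOfInverse
      (R.comp (Submodule.subtypeL _))
      (J.codRestrict _ (fun x => LinearMap.mem_range_self _ x)) ?_ ?_⟩
    · rintro ⟨x, y, rfl⟩
      apply Subtype.ext
      show (J (R (J y)) : E) = J y
      rw [hRJ]
    · intro x
      simp only [ContinuousLinearMap.coe_comp', Function.comp_apply,
        ContinuousLinearMap.coe_codRestrict_apply, Submodule.coe_subtypeL',
        Submodule.coe_subtype]
      exact hRJ x
  · refine ⟨J.comp R, ?_, ?_⟩
    · apply Set.Subset.antisymm
      · rintro x ⟨y, rfl⟩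
        exact ⟨R y, rfl⟩
      · rintro x ⟨y, rfl⟩
        refine ⟨J y, ?_⟩
        show J (R (J y)) = J y
        rw [hRJ]
    · rintro x ⟨y, rfl⟩
      show J (R (J y)) = J y
      rw [hRJ]

theorem factors_of_hasComplementedCopy (h : HasComplementedCopy E ↥c0p) :
    FactorsC0 E := by
  obtain ⟨E₁, _hcl, ⟨T⟩, P, hrange, hfix⟩ := h
  have hmem : ∀ x : E, P x ∈ E₁ := by
    intro x
    have : P x ∈ Set.range P := ⟨x, rfl⟩
    rwa [hrange] at this
  refine ⟨(T : ↥E₁ →L[ℝ] ↥c0p).comp (P.codRestrict E₁ hmem),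
    (Submodule.subtypeL E₁).comp (T.symm : ↥c0p →L[ℝ] ↥E₁), fun x => ?_⟩
  simp only [ContinuousLinearMap.coe_comp', Function.comp_apply, Submodule.coe_subtypeL',
    Submodule.coe_subtype, ContinuousLinearEquiv.coe_coe]
  have h2 : P.codRestrict E₁ hmem ((T.symm x : ↥E₁) : E) = T.symm x := by
    apply Subtype.ext
    simpa using hfix _ (T.symm x).2
  rw [h2]
  simp

theorem hasComplementedCopy_iff_factors [T2Space E] :
    HasComplementedCopy E ↥c0p ↔ FactorsC0 E :=
  ⟨factors_of_hasComplementedCopy, hasComplementedCopy_of_factors⟩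

end FactorsChar

section Helpers

lemma eq_zero_of_abs_mul_lt {a : ℝ} (h : ∀ c : ℝ, |c * a| < 1) : a = 0 := by
  by_contra h0
  have := h (1/a)
  rw [one_div, inv_mul_cancel₀ h0] at this
  norm_num at this

/-- A continuous linear functional on a product of topological modules is killed by
vectors vanishing on a suitable finite set of coordinates. -/
theorem exists_finset_kill {ι : Type*} {M : ι → Type*} [∀ i, TopologicalSpace (M i)]
    [∀ i, AddCommGroup (M i)] [∀ i, Module ℝ (M i)]
    (φ : ((i : ι) → M i) →L[ℝ] ℝ) :
    ∃ S : Finset ι, ∀ g, (∀ i ∈ S, g i = 0) → φ g = 0 := by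
  have hb : φ ⁻¹' (Set.Ioo (-1 : ℝ) 1) ∈ 𝓝 (0 : (i : ι) → M i) := by
    have hcont : Tendsto φ (𝓝 0) (𝓝 (0 : ℝ)) := by
      have := φ.continuous.tendsto 0
      rwa [map_zero] at this
    exact hcont (Ioo_mem_nhds (by norm_num) (by norm_num))
  rw [nhds_pi, Filter.mem_pi] at hb
  obtain ⟨I, hIfin, t, ht, hsub⟩ := hb
  refine ⟨hIfin.toFinset, fun g hg => ?_⟩
  have hmem : ∀ c : ℝ, c • g ∈ I.pi t := by
    intro c i hi
    have hgi : g i = 0 := hg i (hIfin.mem_toFinset.mpr hi)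
    rw [Pi.smul_apply, hgi, smul_zero]
    exact mem_of_mem_nhds (ht i)
  refine eq_zero_of_abs_mul_lt (fun c => ?_)
  have := hsub (hmem c)
  simp only [Set.mem_preimage, Set.mem_Ioo, map_smul, smul_eq_mul] at this
  exact abs_lt.mpr this

/-- Same, for a functional on a submodule of a product (with the subspace topology). -/
theorem exists_finset_kill_sub {ι : Type*} {M : ι → Type*} [∀ i, TopologicalSpace (M i)]
    [∀ i, AddCommGroup (M i)] [∀ i, Module ℝ (M i)]
    (p : Submodule ℝ ((i : ι) → M i)) (ψ : ↥p →L[ℝ] ℝ) :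
    ∃ S : Finset ι, ∀ x : ↥p, (∀ i ∈ S, (x : (i : ι) → M i) i = 0) → ψ x = 0 := by
  have hb : ψ ⁻¹' (Set.Ioo (-1 : ℝ) 1) ∈ 𝓝 (0 : ↥p) := by
    have hcont : Tendsto ψ (𝓝 0) (𝓝 (0 : ℝ)) := by
      have := ψ.continuous.tendsto 0
      rwa [map_zero] at this
    exact hcont (Ioo_mem_nhds (by norm_num) (by norm_num))
  rw [Topology.IsInducing.subtypeVal.nhds_eq_comap (0 : ↥p)] at hb
  obtain ⟨W, hW, hsub⟩ := Filter.mem_comap.mp hb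
  rw [show ((0 : ↥p) : (i : ι) → M i) = 0 from rfl, nhds_pi, Filter.mem_pi] at hW
  obtain ⟨I, hIfin, t, ht, hsubW⟩ := hW
  refine ⟨hIfin.toFinset, fun x hx => ?_⟩
  have hmem : ∀ c : ℝ, ((c • x : ↥p) : (i : ι) → M i) ∈ I.pi t := by
    intro c i hi
    have hgi : (x : (i : ι) → M i) i = 0 := hx i (hIfin.mem_toFinset.mpr hi)
    show ((c • x : ↥p) : (i : ι) → M i) i ∈ t i
    rw [Submodule.coe_smul, Pi.smul_apply, hgi, smul_zero]
    exact mem_of_mem_nhds (ht i)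
  refine eq_zero_of_abs_mul_lt (fun c => ?_)
  have h1 : (c • x : ↥p) ∈ ψ ⁻¹' (Set.Ioo (-1 : ℝ) 1) := hsub (hsubW (hmem c))
  simp only [Set.mem_preimage, Set.mem_Ioo, map_smul, smul_eq_mul] at h1
  exact abs_lt.mpr h1

/-- Construct a continuous linear map into `↥c0p` from coordinate data. -/
def mkToC0 {E : Type*} [TopologicalSpace E] [AddCommGroup E] [Module ℝ E]
    (f : E →ₗ[ℝ] (ℕ → ℝ)) (hcont : ∀ j, Continuous fun v => f v j)
    (hmem : ∀ v, f v ∈ c0p) : E →L[ℝ] ↥c0p where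
  toLinearMap := f.codRestrict c0p hmem
  cont := by
    apply Continuous.subtype_mk
    exact continuous_pi hcont

@[simp] lemma mkToC0_apply {E : Type*} [TopologicalSpace E] [AddCommGroup E] [Module ℝ E]
    (f : E →ₗ[ℝ] (ℕ → ℝ)) (hcont : ∀ j, Continuous fun v => f v j)
    (hmem : ∀ v, f v ∈ c0p) (v : E) (j : ℕ) :
    ((mkToC0 f hcont hmem v : ↥c0p) : ℕ → ℝ) j = f v j := rfl

lemma c0_tendsto (x : ↥c0p) : Tendsto (x : ℕ → ℝ) atTop (𝓝 0) := x.2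

lemma c0_eventually_le (x : ↥c0p) {ε : ℝ} (hε : 0 < ε) :
    ∃ N : ℕ, ∀ n ≥ N, |(x : ℕ → ℝ) n| ≤ ε := by
  have := (Metric.tendsto_atTop.mp x.2) ε hε
  obtain ⟨N, hN⟩ := this
  exact ⟨N, fun n hn => by
    have := hN n hn
    rw [Real.dist_eq, sub_zero] at this
    exact this.le⟩

lemma c0_bounded (x : ↥c0p) : ∃ C : ℝ, 0 ≤ C ∧ ∀ n, |(x : ℕ → ℝ) n| ≤ C := by
  obtain ⟨N, hN⟩ := c0_eventually_le x one_pos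
  refine ⟨1 + ∑ n ∈ Finset.range N, |(x : ℕ → ℝ) n|, by positivity, fun n => ?_⟩
  rcases le_or_gt N n with h | h
  · have h2 : (0:ℝ) ≤ ∑ n ∈ Finset.range N, |(x : ℕ → ℝ) n| :=
      Finset.sum_nonneg fun _ _ => abs_nonneg _
    linarith [hN n h]
  · have h2 : |(x : ℕ → ℝ) n| ≤ ∑ m ∈ Finset.range N, |(x : ℕ → ℝ) m| :=
      Finset.single_le_sum (f := fun m => |(x : ℕ → ℝ) m|) (fun _ _ => abs_nonneg _) (Finset.mem_range.mpr h)
    linarith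


lemma coe_finset_sum_apply {ιG : Type*} (s : Finset ιG) (f : ιG → ↥c0p) (k : ℕ) :
    ((∑ i ∈ s, f i : ↥c0p) : ℕ → ℝ) k = ∑ i ∈ s, ((f i : ↥c0p) : ℕ → ℝ) k := by
  classical
  induction s using Finset.induction with
  | empty => simp
  | insert _ _ h ih =>
      rw [Finset.sum_insert h, Finset.sum_insert h, Submodule.coe_add, Pi.add_apply, ih]

end Helpers

section Maps

/-- Evaluation of a `c₀`-sequence at a coordinate, as a continuous linear functional. -/
noncomputable def evalc0 (t : ℕ) : ↥c0p →L[ℝ] ℝ :=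
  (ContinuousLinearMap.proj t).comp (Submodule.subtypeL c0p)

@[simp] lemma evalc0_apply (t : ℕ) (x : ↥c0p) : evalc0 t x = (x : ℕ → ℝ) t := rfl

/-- The `N`-th standard basis vector of `c₀`. -/
noncomputable def eVec (N : ℕ) : ↥c0p :=
  ⟨fun j => if j = N then 1 else 0, by
    have h : (fun _ : ℕ => (0:ℝ)) =ᶠ[atTop] fun j => if j = N then (1:ℝ) else 0 := by
      filter_upwards [eventually_gt_atTop N] with j hj
      simp [(Nat.ne_of_gt hj)]
    exact (tendsto_const_nhds : Tendsto (fun _ : ℕ => (0:ℝ)) atTop (𝓝 0)).congr' h⟩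

@[simp] lemma eVec_apply (N j : ℕ) : ((eVec N : ↥c0p) : ℕ → ℝ) j = if j = N then 1 else 0 := rfl

/-- Left shift by `K` on `c₀`. -/
noncomputable def shiftL (K : ℕ) : ↥c0p →L[ℝ] ↥c0p :=
  mkToC0
    { toFun := fun x => fun j => (x : ℕ → ℝ) (j + K)
      map_add' := fun x y => rfl
      map_smul' := fun c x => rfl }
    (fun j => (continuous_apply (j + K)).comp continuous_subtype_val)
    (fun x => x.2.comp (tendsto_add_atTop_nat K))

@[simp] lemma shiftL_apply (K : ℕ) (x : ↥c0p) (j : ℕ) :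
    ((shiftL K x : ↥c0p) : ℕ → ℝ) j = (x : ℕ → ℝ) (j + K) := rfl

/-- Right shift by `K` on `c₀`. -/
noncomputable def shiftR (K : ℕ) : ↥c0p →L[ℝ] ↥c0p :=
  mkToC0
    { toFun := fun x => fun j => if j < K then 0 else (x : ℕ → ℝ) (j - K)
      map_add' := fun x y => by
        funext j
        by_cases h : j < K <;> simp [h]
      map_smul' := fun c x => by
        funext j
        by_cases h : j < K <;> simp [h] }
    (fun j => by
      by_cases h : j < K
      · simpa [h] using continuous_const
      · simpa [h, Function.comp_def] using (continuous_apply (j - K)).comp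
          (continuous_subtype_val : Continuous (Subtype.val : ↥c0p → (ℕ → ℝ))))
    (fun x => by
      have h : (fun j => (x : ℕ → ℝ) (j - K)) =ᶠ[atTop]
          (fun j => if j < K then 0 else (x : ℕ → ℝ) (j - K)) := by
        filter_upwards [eventually_ge_atTop K] with j hj
        simp [Nat.not_lt.mpr hj]
      exact (Filter.Tendsto.congr' h (x.2.comp (tendsto_sub_atTop_nat K))))

lemma shiftL_shiftR (K : ℕ) (x : ↥c0p) : shiftL K (shiftR K x) = x := by
  apply Subtype.ext
  funext j
  show (if j + K < K then (0:ℝ) else (x : ℕ → ℝ) (j + K - K)) = (x : ℕ → ℝ) j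
  simp

end Maps

section EasyDirection

variable {X : Type*} [TopologicalSpace X] {ι : Type*}

theorem factors_pi_of_factors [Nonempty ι] (h : FactorsC0 ↥(Cp X ℝ)) :
    FactorsC0 (ι → ↥(Cp X ℝ)) := by
  obtain ⟨R', J', h'⟩ := h
  refine ⟨R'.comp (ContinuousLinearMap.proj (Classical.arbitrary ι)),
    ContinuousLinearMap.pi (fun _ => J'), fun x => ?_⟩
  simp only [ContinuousLinearMap.coe_comp', Function.comp_apply,
    ContinuousLinearMap.proj_apply, ContinuousLinearMap.pi_apply]
  exact h' x

end EasyDirection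

section LemmaU

variable {ι M : Type*} [TopologicalSpace M] [AddCommGroup M] [Module ℝ M]

/-- Coordinate `k` of `R g`. -/
def rapp (R : (ι → M) →L[ℝ] ↥c0p) (g : ι → M) (k : ℕ) : ℝ := ((R g : ↥c0p) : ℕ → ℝ) k

lemma rapp_add (R : (ι → M) →L[ℝ] ↥c0p) (g h : ι → M) (k : ℕ) :
    rapp R (g + h) k = rapp R g k + rapp R h k := by
  simp only [rapp, map_add]
  rfl

lemma rapp_smul (R : (ι → M) →L[ℝ] ↥c0p) (c : ℝ) (g : ι → M) (k : ℕ) :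
    rapp R (c • g) k = c * rapp R g k := by
  simp only [rapp, map_smul]
  rfl

lemma rapp_tendsto (R : (ι → M) →L[ℝ] ↥c0p) (g : ι → M) :
    Tendsto (rapp R g) atTop (𝓝 0) := (R g).2

lemma rapp_sum (R : (ι → M) →L[ℝ] ↥c0p) {s : Finset ℕ} (f : ℕ → ι → M) (k : ℕ) :
    rapp R (∑ j ∈ s, f j) k = ∑ j ∈ s, rapp R (f j) k := by
  classical
  induction s using Finset.induction with
  | empty => simp [rapp, map_zero]
  | insert _ _ hnotmem ih =>
      rw [Finset.sum_insert hnotmem, Finset.sum_insert hnotmem, rapp_add, ih]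

/-- Truncation of `g` to a finite coordinate set. -/
def psiT [DecidableEq ι] (S : Finset ι) (g : ι → M) : ι → M := fun i => if i ∈ S then g i else 0

lemma psiT_add [DecidableEq ι] (S : Finset ι) (g h : ι → M) :
    psiT S (g + h) = psiT S g + psiT S h := by
  funext i
  simp only [psiT, Pi.add_apply]
  split <;> simp

variable (R : (ι → M) →L[ℝ] ↥c0p)

/-- **Lemma U**: all sufficiently late rows of `R` depend only on a fixed finite set of
coordinates. -/
theorem lemma_U :
    ∃ (G : Finset ι) (K : ℕ), ∀ k, K ≤ k → ∀ g : ι → M, (∀ i ∈ G, g i = 0) →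
      rapp R g k = 0 := by
  classical
  -- kill sets for the rows
  obtain ⟨S, hS⟩ : ∃ S : ℕ → Finset ι, ∀ k g, (∀ i ∈ S k, g i = 0) → rapp R g k = 0 := by
    have h := fun k => exists_finset_kill ((evalc0 k).comp R)
    choose S hS using h
    exact ⟨S, fun k g hg => hS k g hg⟩
  -- truncation identity
  have trunc : ∀ k (g : ι → M), rapp R g k = rapp R (psiT (S k) g) k := by
    intro k g
    have hsplit : g = psiT (S k) g + fun i => if i ∈ S k then 0 else g i := by
      funext i
      simp only [psiT, Pi.add_apply]
      split <;> simp
    have hkill : rapp R (fun i => if i ∈ S k then 0 else g i) k = 0 := by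
      apply hS
      intro i hi
      simp [hi]
    conv_lhs => rw [hsplit]
    rw [rapp_add, hkill, add_zero]
  by_contra hcon
  push_neg at hcon
  -- hcon : ∀ G K, ∃ k, K ≤ k ∧ ∃ g, (∀ i ∈ G, g i = 0) ∧ rapp R g k ≠ 0
  choose kk hkk gg hvan hne using hcon
  -- threshold function
  have hthr : ∀ (v : ι → M) (j : ℕ), ∃ K, ∀ k ≥ K, |rapp R v k| ≤ (4:ℝ)⁻¹ ^ j := by
    intro v j
    exact c0_eventually_le (R v) (by positivity)
  choose thr hthrspec using hthr
  -- the recursive construction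
  let Gset : List (ℕ × (ι → M)) → Finset ι := fun l => l.foldr (fun p acc => S p.1 ∪ acc) ∅
  let Kb : List (ℕ × (ι → M)) → ℕ :=
    fun l => l.foldr (fun p acc => max (p.1 + 1) (max (thr p.2 l.length) acc)) 0
  let next : List (ℕ × (ι → M)) → ℕ × (ι → M) := fun l =>
    let G := Gset l
    let K := Kb l
    let k := kk G K
    let g := gg G K
    (k, (rapp R g k)⁻¹ • psiT (S k) g)
  let st : ℕ → List (ℕ × (ι → M)) := fun n => Nat.rec [] (fun _ l => l ++ [next l]) n
  have st_succ : ∀ n, st (n + 1) = st n ++ [next (st n)] := fun n => rfl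
  let pr : ℕ → ℕ × (ι → M) := fun j => next (st j)
  have st_eq : ∀ n, st n = (List.range n).map pr := by
    intro n
    induction n with
    | zero => rfl
    | succ n ih => rw [st_succ, List.range_succ, List.map_append, ← ih]; rfl
  set kf : ℕ → ℕ := fun j => (pr j).1 with hkf
  set gf : ℕ → (ι → M) := fun j => (pr j).2 with hgf
  -- basic properties of folds
  have hGset_mem : ∀ (l : List (ℕ × (ι → M))) (p : ℕ × (ι → M)), p ∈ l → S p.1 ⊆ Gset l := by
    intro l
    induction l with
    | nil => intro p hp; cases hp
    | cons q l ih =>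
        intro p hp
        rcases List.mem_cons.mp hp with h | h
        · subst h; exact Finset.subset_union_left
        · exact (ih p h).trans Finset.subset_union_right
  have hKb_mem : ∀ (l : List (ℕ × (ι → M))) (p : ℕ × (ι → M)), p ∈ l →
      p.1 + 1 ≤ Kb l ∧ thr p.2 l.length ≤ Kb l := by
    intro l
    have haux : ∀ (m : ℕ) (l : List (ℕ × (ι → M))) (p : ℕ × (ι → M)), p ∈ l →
        p.1 + 1 ≤ l.foldr (fun p acc => max (p.1 + 1) (max (thr p.2 m) acc)) 0 ∧
        thr p.2 m ≤ l.foldr (fun p acc => max (p.1 + 1) (max (thr p.2 m) acc)) 0 := by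
      intro m l
      induction l with
      | nil => intro p hp; cases hp
      | cons q l ih =>
          intro p hp
          rcases List.mem_cons.mp hp with h | h
          · subst h
            constructor
            · exact le_max_left _ _
            · exact le_max_of_le_right (le_max_left _ _)
          · obtain ⟨h1, h2⟩ := ih p h
            exact ⟨le_max_of_le_right (le_max_of_le_right h1),
              le_max_of_le_right (le_max_of_le_right h2)⟩
    intro p hp
    exact haux l.length l p hp
  have hlen : ∀ n, (st n).length = n := by
    intro n
    rw [st_eq]
    simp
  have hmem_st : ∀ j n, j < n → pr j ∈ st n := by
    intro j n hj
    rw [st_eq]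
    exact List.mem_map_of_mem (f := pr) (List.mem_range.mpr hj)
  -- unfolding the choice at step j
  have hstep : ∀ j, kf j = kk (Gset (st j)) (Kb (st j)) ∧
      gf j = (rapp R (gg (Gset (st j)) (Kb (st j))) (kf j))⁻¹ •
        psiT (S (kf j)) (gg (Gset (st j)) (Kb (st j))) := by
    intro j
    constructor
    · rfl
    · rfl
  -- property: diagonal value 1
  have hdiag : ∀ j, rapp R (gf j) (kf j) = 1 := by
    intro j
    obtain ⟨h1, h2⟩ := hstep j
    rw [h2, rapp_smul, ← trunc]
    rw [h1]
    exact inv_mul_cancel₀ (hne _ _)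
  -- kf j ≥ Kb (st j)
  have hkge : ∀ j, Kb (st j) ≤ kf j := fun j => hkk _ _
  -- kf strictly increasing
  have hmono : ∀ j' j, j' < j → kf j' < kf j := by
    intro j' j hj
    have h1 : kf j' + 1 ≤ Kb (st j) := (hKb_mem (st j) (pr j') (hmem_st j' j hj)).1
    have h2 := hkge j
    omega
  -- support of gf j inside S (kf j)
  have hsupp : ∀ j i, i ∉ S (kf j) → gf j i = 0 := by
    intro j i hi
    rw [(hstep j).2]
    simp only [Pi.smul_apply, psiT, if_neg hi, smul_zero]
  -- gf j vanishes on Gset (st j)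
  have hvanG : ∀ j i, i ∈ Gset (st j) → gf j i = 0 := by
    intro j i hi
    rw [(hstep j).2]
    have : gg (Gset (st j)) (Kb (st j)) i = 0 := hvan _ _ i hi
    simp only [Pi.smul_apply, psiT]
    split
    · rw [this, smul_zero]
    · rw [smul_zero]
  -- earlier kill sets are inside later Gsets
  have hSsub : ∀ j' j, j' < j → S (kf j') ⊆ Gset (st j) :=
    fun j' j hj => hGset_mem (st j) (pr j') (hmem_st j' j hj)
  -- disjointness of supports
  have hdisj : ∀ j' j i, j' < j → gf j' i ≠ 0 → gf j i = 0 := by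
    intro j' j i hj hne'
    by_cases hi : i ∈ S (kf j')
    · exact hvanG j i (hSsub j' j hj hi)
    · exact absurd (hsupp j' i hi) hne'
  -- the big vector
  let gbig : ι → M := fun i => if h : ∃ j, gf j i ≠ 0 then gf (Nat.find h) i else 0
  have hgbig : ∀ i, gbig i = if h : ∃ j, gf j i ≠ 0 then gf (Nat.find h) i else 0 :=
    fun i => rfl
  -- Claim A
  have claimA : ∀ j i, i ∈ S (kf j) → gbig i = (∑ j' ∈ Finset.range (j+1), gf j') i := by
    intro j i hi
    by_cases h : ∃ j'', gf j'' i ≠ 0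
    · have hfind := Nat.find_spec h
      set j₀ := Nat.find h with hj₀
      have hj₀le : j₀ ≤ j := by
        by_contra hgt
        push_neg at hgt
        exact hfind (hvanG j₀ i (hSsub j j₀ hgt hi))
      have hgb : gbig i = gf j₀ i := by
        rw [hgbig i]
        simp only [dif_pos h]
        rfl
      rw [hgb, Finset.sum_apply]
      symm
      apply Finset.sum_eq_single_of_mem j₀ (Finset.mem_range.mpr (by omega))
      intro b hb hbne
      rcases lt_or_gt_of_ne hbne with hlt | hgt
      · by_contra hbne0
        exact hfind (hdisj b j₀ i hlt hbne0)
      · exact hdisj j₀ b i hgt hfind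
    · have hgb : gbig i = 0 := by
        rw [hgbig i, dif_neg h]
      push_neg at h
      rw [hgb, Finset.sum_apply]
      symm
      exact Finset.sum_eq_zero fun j' _ => h j'
  -- Claim B
  have claimB : ∀ j, rapp R gbig (kf j) =
      ∑ j' ∈ Finset.range (j+1), rapp R (gf j') (kf j) := by
    intro j
    rw [trunc (kf j) gbig, ← rapp_sum]
    rw [trunc (kf j) (∑ j' ∈ Finset.range (j+1), gf j')]
    congr 1
    funext i
    simp only [psiT]
    split
    · exact claimA j i (by assumption)
    · rfl
  -- smallness of the off-diagonal terms
  have hoff : ∀ j' j, j' < j → |rapp R (gf j') (kf j)| ≤ (4:ℝ)⁻¹ ^ j := by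
    intro j' j hj
    apply hthrspec (gf j') j (kf j)
    have h2 := (hKb_mem (st j) (pr j') (hmem_st j' j hj)).2
    rw [hlen] at h2
    exact le_trans h2 (hkge j)
  -- lower bound
  have hlow : ∀ j, (1:ℝ)/2 ≤ |rapp R gbig (kf j)| := by
    intro j
    rw [claimB j, Finset.sum_range_succ, hdiag j]
    have hsum : |∑ j' ∈ Finset.range j, rapp R (gf j') (kf j)| ≤ (j:ℝ) * (4:ℝ)⁻¹ ^ j := by
      calc |∑ j' ∈ Finset.range j, rapp R (gf j') (kf j)|
          ≤ ∑ j' ∈ Finset.range j, |rapp R (gf j') (kf j)| := Finset.abs_sum_le_sum_abs _ _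
        _ ≤ ∑ _j' ∈ Finset.range j, (4:ℝ)⁻¹ ^ j :=
            Finset.sum_le_sum fun j' hj' => hoff j' j (Finset.mem_range.mp hj')
        _ = (j:ℝ) * (4:ℝ)⁻¹ ^ j := by rw [Finset.sum_const, Finset.card_range]; ring
    have hj4 : (j:ℝ) * (4:ℝ)⁻¹ ^ j ≤ 1/2 := by
      rcases Nat.eq_zero_or_pos j with h0 | hpos
      · subst h0; norm_num
      · have h1 : (j:ℝ) ≤ 2 ^ j := by
          exact_mod_cast (Nat.lt_two_pow_self (n := j)).le
        have h2 : (2:ℝ) ^ j * (4:ℝ)⁻¹ ^ j = (2:ℝ)⁻¹ ^ j := by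
          rw [← mul_pow]; norm_num
        have h3 : (2:ℝ)⁻¹ ^ j ≤ (2:ℝ)⁻¹ ^ 1 :=
          pow_le_pow_of_le_one (by norm_num) (by norm_num) hpos
        calc (j:ℝ) * (4:ℝ)⁻¹ ^ j ≤ (2:ℝ) ^ j * (4:ℝ)⁻¹ ^ j :=
              mul_le_mul_of_nonneg_right h1 (by positivity)
          _ = (2:ℝ)⁻¹ ^ j := h2
          _ ≤ 1/2 := by simpa using h3
    have h5 := abs_sub_abs_le_abs_sub (1:ℝ)
      (-(∑ j' ∈ Finset.range j, rapp R (gf j') (kf j)))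
    rw [abs_neg, abs_one, sub_neg_eq_add] at h5
    have h6 : (∑ j' ∈ Finset.range j, rapp R (gf j') (kf j)) + 1 =
        1 + ∑ j' ∈ Finset.range j, rapp R (gf j') (kf j) := add_comm _ _
    calc (1:ℝ)/2 = 1 - 1/2 := by norm_num
      _ ≤ 1 - (j:ℝ) * (4:ℝ)⁻¹ ^ j := by linarith
      _ ≤ 1 - |∑ j' ∈ Finset.range j, rapp R (gf j') (kf j)| := by linarith
      _ ≤ |∑ j' ∈ Finset.range j, rapp R (gf j') (kf j) + 1| := by
          rw [h6]; exact h5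
  -- contradiction with R gbig ∈ c₀
  obtain ⟨N, hN⟩ := c0_eventually_le (R gbig) (show (0:ℝ) < 1/4 by norm_num)
  have hkfN : N ≤ kf N := by
    have hsm : StrictMono kf := strictMono_nat_of_lt_succ fun n => hmono n (n+1) (by omega)
    exact hsm.le_apply
  have := hN (kf N) hkfN
  have := hlow N
  have : (1:ℝ)/2 ≤ 1/4 := le_trans this (hN (kf N) hkfN)
  norm_num at this

end LemmaU

section Reduction

variable {ι M : Type*} [TopologicalSpace M] [AddCommGroup M] [Module ℝ M]

/-- Insertion at coordinate `i`, as a continuous linear map. -/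
def singleL [DecidableEq ι] (i : ι) : M →L[ℝ] (ι → M) where
  toLinearMap := LinearMap.single ℝ (fun _ => M) i
  cont := by
    apply continuous_pi
    intro j
    have hfun : (fun m : M => LinearMap.single ℝ (fun _ => M) i m j)
        = fun m : M => if j = i then m else 0 := by
      funext m
      exact Pi.single_apply i m j
    show Continuous fun m : M => LinearMap.single ℝ (fun _ => M) i m j
    rw [hfun]
    by_cases hji : j = i
    · simp only [if_pos hji]; exact continuous_id
    · simpa [hji] using (continuous_const : Continuous fun _ : M => (0:M))

@[simp] lemma singleL_apply [DecidableEq ι] (i : ι) (m : M) (j : ι) :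
    singleL i m j = if j = i then m else 0 := Pi.single_apply i m j

/-- `FarBig T ε`: arbitrarily far out there are finitely supported vectors of sup-norm
at most `1` whose image under `T` has some coordinate of size at least `ε`. -/
def FarBig (T : ↥c0p →L[ℝ] ↥c0p) (ε : ℝ) : Prop :=
  ∀ N : ℕ, ∃ z : ↥c0p,
    (∃ D : Finset ℕ, ∀ t ∉ D, (z : ℕ → ℝ) t = 0) ∧
    (∀ t < N, (z : ℕ → ℝ) t = 0) ∧
    (∀ t, |(z : ℕ → ℝ) t| ≤ 1) ∧
    ∃ t, ε ≤ |((T z : ↥c0p) : ℕ → ℝ) t|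

/-- From a factorization through a product, a single coordinate `i₀` supports a
"far big" composite operator. -/
theorem exists_farBig_coordinate
    (R : (ι → M) →L[ℝ] ↥c0p) (J : ↥c0p →L[ℝ] (ι → M)) (hRJ : ∀ x, R (J x) = x) :
    ∃ (A : M →L[ℝ] ↥c0p) (Bm : ↥c0p →L[ℝ] M) (ε : ℝ), 0 < ε ∧ FarBig (A.comp Bm) ε := by
  classical
  obtain ⟨G, K₀, hG⟩ := lemma_U R
  set Rt : (ι → M) →L[ℝ] ↥c0p := (shiftL K₀).comp R with hRt
  set Jt : ↥c0p →L[ℝ] (ι → M) := J.comp (shiftR K₀) with hJt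
  have hRtJt : ∀ x, Rt (Jt x) = x := by
    intro x
    show shiftL K₀ (R (J (shiftR K₀ x))) = x
    rw [hRJ, shiftL_shiftR]
  have hRtkill : ∀ k (g : ι → M), (∀ i ∈ G, g i = 0) → rapp Rt g k = 0 := by
    intro k g hg
    show ((shiftL K₀ (R g) : ↥c0p) : ℕ → ℝ) k = 0
    rw [shiftL_apply]
    exact hG (k + K₀) (by omega) g hg
  set Bop : ι → (↥c0p →L[ℝ] ↥c0p) := fun i =>
    (Rt.comp (singleL i)).comp ((ContinuousLinearMap.proj i).comp Jt) with hBop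
  have hBopapply : ∀ i x, Bop i x = Rt (singleL i ((Jt x) i)) := fun i x => rfl
  -- the finite sum identity
  have hsum : ∀ x : ↥c0p, ∑ i ∈ G, Bop i x = x := by
    intro x
    set y : ι → M := Jt x with hy
    set v : ι → M := ∑ i ∈ G, Pi.single i (y i) with hv
    have h1 : ∑ i ∈ G, Bop i x = Rt v := by
      rw [hv, map_sum]
      rfl
    have h2 : Rt (y - v) = 0 := by
      apply Subtype.ext
      funext k
      show rapp Rt (y - v) k = 0
      apply hRtkill
      intro i hi
      have hvi : v i = y i := by
        have hstep2 : v i = ∑ i' ∈ G, (if i = i' then y i' else 0) := by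
          rw [hv, Finset.sum_apply]
          apply Finset.sum_congr rfl
          intro i' _
          exact Pi.single_apply i' (y i') i
        rw [hstep2, Finset.sum_ite_eq G i (fun i' => y i'), if_pos hi]
      simp [Pi.sub_apply, hvi]
    have h3 : Rt y = Rt v := by
      have := map_add Rt v (y - v)
      rw [h2, add_zero] at this
      rw [← this]
      congr 1
      abel
    rw [h1, ← h3, hy, hRtJt]
  -- dichotomy
  have hdich : ∃ i ∈ G, FarBig (Bop i) ((1:ℝ)/(2 * G.card)) := by
    by_contra hcon
    push_neg at hcon
    -- each coordinate is "far small"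
    have hsmall : ∀ i ∈ G, ∃ N : ℕ, ∀ z : ↥c0p,
        (∃ D : Finset ℕ, ∀ t ∉ D, (z : ℕ → ℝ) t = 0) →
        (∀ t < N, (z : ℕ → ℝ) t = 0) →
        (∀ t, |(z : ℕ → ℝ) t| ≤ 1) →
        ∀ t, |((Bop i z : ↥c0p) : ℕ → ℝ) t| < (1:ℝ)/(2 * G.card) := by
      intro i hi
      have := hcon i hi
      rw [FarBig] at this
      push_neg at this
      obtain ⟨N, hN⟩ := this
      exact ⟨N, fun z h1 h2 h3 t => hN z h1 h2 h3 t⟩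
    choose Nf hNf using hsmall
    have hGne : G.Nonempty := by
      rcases Finset.eq_empty_or_nonempty G with h | h
      · exfalso
        have := hsum (eVec 0)
        rw [h, Finset.sum_empty] at this
        have h0 : ((0 : ↥c0p) : ℕ → ℝ) 0 = ((eVec 0 : ↥c0p) : ℕ → ℝ) 0 := by rw [this]
        simp at h0
      · exact h
    set N : ℕ := G.sup fun i => if h : i ∈ G then Nf i h else 0 with hN
    have hNi : ∀ i (hi : i ∈ G), Nf i hi ≤ N := by
      intro i hi
      have h2 : (if h : i ∈ G then Nf i h else 0) ≤ N := by
        simpa using Finset.le_sup (f := fun i => if h : i ∈ G then Nf i h else 0) hi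
      rwa [dif_pos hi] at h2
    -- eVec N is a far unit block
    have hz1 : ∃ D : Finset ℕ, ∀ t ∉ D, ((eVec N : ↥c0p) : ℕ → ℝ) t = 0 := by
      refine ⟨{N}, fun t ht => ?_⟩
      simp only [eVec_apply]
      simp only [Finset.mem_singleton] at ht
      simp [ht]
    have hz2 : ∀ t < N, ((eVec N : ↥c0p) : ℕ → ℝ) t = 0 := by
      intro t ht
      simp only [eVec_apply]
      simp [Nat.ne_of_lt ht]
    have hz3 : ∀ t, |((eVec N : ↥c0p) : ℕ → ℝ) t| ≤ 1 := by
      intro t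
      simp only [eVec_apply]
      split <;> norm_num
    have hsum1 : ∑ i ∈ G, ((Bop i (eVec N) : ↥c0p) : ℕ → ℝ) N = 1 := by
      have h1 : ((∑ i ∈ G, Bop i (eVec N) : ↥c0p) : ℕ → ℝ) N
          = ((eVec N : ↥c0p) : ℕ → ℝ) N := by rw [hsum (eVec N)]
      rw [coe_finset_sum_apply] at h1
      rw [h1]
      simp
    have hlt : ∑ i ∈ G, ((Bop i (eVec N) : ↥c0p) : ℕ → ℝ) N < 1 := by
      have hcard : (0:ℝ) < G.card := by
        have := hGne.card_pos
        exact_mod_cast this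
      calc ∑ i ∈ G, ((Bop i (eVec N) : ↥c0p) : ℕ → ℝ) N
          ≤ ∑ i ∈ G, |((Bop i (eVec N) : ↥c0p) : ℕ → ℝ) N| :=
            Finset.sum_le_sum fun i _ => le_abs_self _
        _ ≤ ∑ i ∈ G.attach, |((Bop i.1 (eVec N) : ↥c0p) : ℕ → ℝ) N| := by
            rw [← Finset.sum_attach G fun i => |((Bop i (eVec N) : ↥c0p) : ℕ → ℝ) N|]
        _ < ∑ _i ∈ G.attach, (1:ℝ)/(2 * G.card) := by
            apply Finset.sum_lt_sum_of_nonempty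
            · exact Finset.attach_nonempty_iff.mpr hGne
            · intro i _
              exact hNf i.1 i.2 (eVec N) hz1
                (fun t ht => hz2 t (lt_of_lt_of_le ht (hNi i.1 i.2))) hz3 N
        _ = G.card * ((1:ℝ)/(2 * G.card)) := by
            rw [Finset.sum_const, Finset.card_attach]
            simp [mul_comm]
        _ < 1 := by
            rw [div_eq_mul_inv, one_mul]
            rw [mul_inv]
            calc (G.card : ℝ) * ((2:ℝ)⁻¹ * (G.card:ℝ)⁻¹)
                = ((G.card:ℝ) * (G.card:ℝ)⁻¹) * (2:ℝ)⁻¹ := by ring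
              _ = (2:ℝ)⁻¹ := by rw [mul_inv_cancel₀ (ne_of_gt hcard), one_mul]
              _ < 1 := by norm_num
    rw [hsum1] at hlt
    exact lt_irrefl _ hlt
  obtain ⟨i₀, _hi₀, hfb⟩ := hdich
  refine ⟨Rt.comp (singleL i₀), (ContinuousLinearMap.proj i₀).comp Jt, (1:ℝ)/(2 * G.card),
    ?_, ?_⟩
  · have hcard : (0:ℝ) < G.card := by
      have hGne : G.Nonempty := by
        by_contra hne
        rw [Finset.not_nonempty_iff_eq_empty] at hne
        have := hsum (eVec 0)
        rw [hne, Finset.sum_empty] at this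
        have h0 : ((0 : ↥c0p) : ℕ → ℝ) 0 = ((eVec 0 : ↥c0p) : ℕ → ℝ) 0 := by rw [this]
        simp at h0
      exact_mod_cast hGne.card_pos
    positivity
  · exact hfb
end Reduction

section Triangular

/-- `(j : ℝ) * (1/4)^j ≤ 1/2`. -/
lemma j_mul_q_le_half (j : ℕ) : (j:ℝ) * (4:ℝ)⁻¹ ^ j ≤ 1/2 := by
  rcases Nat.eq_zero_or_pos j with h0 | hpos
  · subst h0; norm_num
  · have h1 : (j:ℝ) ≤ 2 ^ j := by exact_mod_cast (Nat.lt_two_pow_self (n := j)).le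
    have h2 : (2:ℝ) ^ j * (4:ℝ)⁻¹ ^ j = (2:ℝ)⁻¹ ^ j := by rw [← mul_pow]; norm_num
    have h3 : (2:ℝ)⁻¹ ^ j ≤ (2:ℝ)⁻¹ ^ 1 := pow_le_pow_of_le_one (by norm_num) (by norm_num) hpos
    calc (j:ℝ) * (4:ℝ)⁻¹ ^ j ≤ (2:ℝ) ^ j * (4:ℝ)⁻¹ ^ j :=
          mul_le_mul_of_nonneg_right h1 (by positivity)
      _ = (2:ℝ)⁻¹ ^ j := h2
      _ ≤ 1/2 := by simpa using h3

lemma j_mul_q_le_pow (j : ℕ) : (j:ℝ) * (4:ℝ)⁻¹ ^ j ≤ (2:ℝ)⁻¹ ^ j := by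
  have h1 : (j:ℝ) ≤ 2 ^ j := by exact_mod_cast (Nat.lt_two_pow_self (n := j)).le
  have h2 : (2:ℝ) ^ j * (4:ℝ)⁻¹ ^ j = (2:ℝ)⁻¹ ^ j := by rw [← mul_pow]; norm_num
  calc (j:ℝ) * (4:ℝ)⁻¹ ^ j ≤ (2:ℝ) ^ j * (4:ℝ)⁻¹ ^ j :=
        mul_le_mul_of_nonneg_right h1 (by positivity)
    _ = (2:ℝ)⁻¹ ^ j := h2

/-- Forward substitution: the inverse of the unitriangular matrix `1 + S` applied to `x`. -/
noncomputable def Hc (S : ℕ → ℕ → ℝ) (x : ℕ → ℝ) : ℕ → ℝ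
  | j => x j - ∑ m ∈ (Finset.range j).attach, S j m.1 * Hc S x m.1
termination_by j => j
decreasing_by exact Finset.mem_range.mp m.2

lemma Hc_eq (S : ℕ → ℕ → ℝ) (x : ℕ → ℝ) (j : ℕ) :
    Hc S x j = x j - ∑ m ∈ Finset.range j, S j m * Hc S x m := by
  rw [Hc]
  congr 1
  rw [← Finset.sum_attach (Finset.range j) (fun m => S j m * Hc S x m)]

/-- The "matrix" `1 + S` applied to `y`. -/
def Gapp (S : ℕ → ℕ → ℝ) (y : ℕ → ℝ) (j : ℕ) : ℝ := y j + ∑ m ∈ Finset.range j, S j m * y m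

lemma Gapp_Hc (S : ℕ → ℕ → ℝ) (x : ℕ → ℝ) (j : ℕ) : Gapp S (Hc S x) j = x j := by
  rw [Gapp, Hc_eq]
  ring

lemma Hc_Gapp (S : ℕ → ℕ → ℝ) (x : ℕ → ℝ) (j : ℕ) : Hc S (Gapp S x) j = x j := by
  induction j using Nat.strong_induction_on with
  | _ j ih =>
    rw [Hc_eq]
    have hsum : ∑ m ∈ Finset.range j, S j m * Hc S (Gapp S x) m
        = ∑ m ∈ Finset.range j, S j m * x m := by
      apply Finset.sum_congr rfl
      intro m hm
      rw [ih m (Finset.mem_range.mp hm)]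
    rw [hsum, Gapp]
    ring

lemma Hc_add (S : ℕ → ℕ → ℝ) (x y : ℕ → ℝ) (j : ℕ) :
    Hc S (x + y) j = Hc S x j + Hc S y j := by
  induction j using Nat.strong_induction_on with
  | _ j ih =>
    rw [Hc_eq, Hc_eq, Hc_eq]
    have hsum : ∑ m ∈ Finset.range j, S j m * Hc S (x + y) m
        = ∑ m ∈ Finset.range j, (S j m * Hc S x m + S j m * Hc S y m) := by
      apply Finset.sum_congr rfl
      intro m hm
      rw [ih m (Finset.mem_range.mp hm)]
      ring
    rw [hsum, Finset.sum_add_distrib]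
    simp only [Pi.add_apply]
    ring

lemma Hc_smul (S : ℕ → ℕ → ℝ) (c : ℝ) (x : ℕ → ℝ) (j : ℕ) :
    Hc S (c • x) j = c * Hc S x j := by
  induction j using Nat.strong_induction_on with
  | _ j ih =>
    rw [Hc_eq, Hc_eq]
    have hsum : ∑ m ∈ Finset.range j, S j m * Hc S (c • x) m
        = ∑ m ∈ Finset.range j, c * (S j m * Hc S x m) := by
      apply Finset.sum_congr rfl
      intro m hm
      rw [ih m (Finset.mem_range.mp hm)]
      ring
    rw [hsum, ← Finset.mul_sum]
    simp only [Pi.smul_apply, smul_eq_mul]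
    ring

lemma Hc_bound {S : ℕ → ℕ → ℝ} (hS : ∀ j m, m < j → |S j m| ≤ (4:ℝ)⁻¹ ^ j)
    {x : ℕ → ℝ} {C : ℝ} (hC : 0 ≤ C) (hxC : ∀ n, |x n| ≤ C) :
    ∀ j, |Hc S x j| ≤ 2 * C := by
  intro j
  induction j using Nat.strong_induction_on with
  | _ j ih =>
    rw [Hc_eq]
    have hsum : |∑ m ∈ Finset.range j, S j m * Hc S x m| ≤ (j:ℝ) * ((4:ℝ)⁻¹ ^ j * (2 * C)) := by
      calc |∑ m ∈ Finset.range j, S j m * Hc S x m|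
          ≤ ∑ m ∈ Finset.range j, |S j m * Hc S x m| := Finset.abs_sum_le_sum_abs _ _
        _ ≤ ∑ _m ∈ Finset.range j, (4:ℝ)⁻¹ ^ j * (2 * C) := by
            apply Finset.sum_le_sum
            intro m hm
            rw [abs_mul]
            exact mul_le_mul (hS j m (Finset.mem_range.mp hm))
              (ih m (Finset.mem_range.mp hm)) (abs_nonneg _) (by positivity)
        _ = (j:ℝ) * ((4:ℝ)⁻¹ ^ j * (2 * C)) := by
            rw [Finset.sum_const, Finset.card_range]; ring
    have hj : (j:ℝ) * (4:ℝ)⁻¹ ^ j ≤ 1/2 := j_mul_q_le_half j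
    have h2 : (j:ℝ) * ((4:ℝ)⁻¹ ^ j * (2 * C)) ≤ C := by
      have := mul_le_mul_of_nonneg_right hj (by positivity : (0:ℝ) ≤ 2 * C)
      calc (j:ℝ) * ((4:ℝ)⁻¹ ^ j * (2 * C)) = ((j:ℝ) * (4:ℝ)⁻¹ ^ j) * (2 * C) := by ring
        _ ≤ (1/2) * (2 * C) := this
        _ = C := by ring
    calc |x j - ∑ m ∈ Finset.range j, S j m * Hc S x m|
        ≤ |x j| + |∑ m ∈ Finset.range j, S j m * Hc S x m| := abs_sub _ _
      _ ≤ C + C := add_le_add (hxC j) (le_trans hsum h2)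
      _ = 2 * C := by ring

lemma Hc_c0 {S : ℕ → ℕ → ℝ} (hS : ∀ j m, m < j → |S j m| ≤ (4:ℝ)⁻¹ ^ j)
    {x : ℕ → ℝ} (hx : Tendsto x atTop (𝓝 0)) : Tendsto (Hc S x) atTop (𝓝 0) := by
  obtain ⟨C, hC0, hxC⟩ :
      ∃ C : ℝ, 0 ≤ C ∧ ∀ n, |x n| ≤ C := by
    obtain ⟨C, hC0, hxC⟩ := c0_bounded ⟨x, hx⟩
    exact ⟨C, hC0, hxC⟩
  have hdiff : ∀ j, |Hc S x j - x j| ≤ (2 * C) * (2:ℝ)⁻¹ ^ j := by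
    intro j
    rw [Hc_eq]
    have h1 : |x j - ∑ m ∈ Finset.range j, S j m * Hc S x m - x j|
        = |∑ m ∈ Finset.range j, S j m * Hc S x m| := by
      rw [show x j - ∑ m ∈ Finset.range j, S j m * Hc S x m - x j
          = -(∑ m ∈ Finset.range j, S j m * Hc S x m) by ring, abs_neg]
    rw [h1]
    calc |∑ m ∈ Finset.range j, S j m * Hc S x m|
        ≤ ∑ m ∈ Finset.range j, |S j m * Hc S x m| := Finset.abs_sum_le_sum_abs _ _
      _ ≤ ∑ _m ∈ Finset.range j, (4:ℝ)⁻¹ ^ j * (2 * C) := by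
          apply Finset.sum_le_sum
          intro m hm
          rw [abs_mul]
          exact mul_le_mul (hS j m (Finset.mem_range.mp hm))
            (Hc_bound hS hC0 hxC m) (abs_nonneg _) (by positivity)
      _ = ((j:ℝ) * (4:ℝ)⁻¹ ^ j) * (2 * C) := by
          rw [Finset.sum_const, Finset.card_range]; ring
      _ ≤ (2:ℝ)⁻¹ ^ j * (2 * C) :=
          mul_le_mul_of_nonneg_right (j_mul_q_le_pow j) (by positivity)
      _ = (2 * C) * (2:ℝ)⁻¹ ^ j := by ring
  have htend : Tendsto (fun j => Hc S x j - x j) atTop (𝓝 0) := by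
    apply squeeze_zero_norm hdiff
    have : Tendsto (fun j : ℕ => (2:ℝ)⁻¹ ^ j) atTop (𝓝 0) :=
      tendsto_pow_atTop_nhds_zero_of_lt_one (by norm_num) (by norm_num)
    have h2 := this.const_mul (2 * C)
    simpa using h2
  have := htend.add hx
  simpa using this

end Triangular

section Blocks

theorem factor_of_farBig {T : ↥c0p →L[ℝ] ↥c0p} {ε : ℝ} (hε : 0 < ε) (hT : FarBig T ε) :
    ∃ (V W : ↥c0p →L[ℝ] ↥c0p), ∀ x, V (T (W x)) = x := by
  classical
  -- kill sets for the rows of T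
  obtain ⟨F, hF⟩ : ∃ F : ℕ → Finset ℕ, ∀ t (x : ↥c0p),
      (∀ s ∈ F t, (x : ℕ → ℝ) s = 0) → ((T x : ↥c0p) : ℕ → ℝ) t = 0 := by
    have h := fun t => exists_finset_kill_sub c0p ((evalc0 t).comp T)
    choose F hF using h
    exact ⟨F, fun t x hx => hF t x hx⟩
  -- uniform decay thresholds for a list of previous blocks
  have hthr : ∀ (l : List (↥c0p × Finset ℕ × ℕ × ℕ)) (b : ℝ), 0 < b →
      ∃ Mv : ℕ, ∀ q ∈ l, ∀ s, Mv ≤ s → |((T q.1 : ↥c0p) : ℕ → ℝ) s| ≤ b := by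
    intro l b hb
    induction l with
    | nil => exact ⟨0, by simp⟩
    | cons q l ih =>
        obtain ⟨Mv, hMv⟩ := ih
        obtain ⟨Mq, hMq⟩ := c0_eventually_le (T q.1) hb
        refine ⟨max Mv Mq, fun q' hq' s hs => ?_⟩
        rcases List.mem_cons.mp hq' with h | h
        · subst h; exact hMq s (le_trans (le_max_right _ _) hs)
        · exact hMv q' h s (le_trans (le_max_left _ _) hs)
  have hfold : ∀ (L : List ℕ) (a : ℕ), a ∈ L → a ≤ L.foldr max 0 := by
    intro L
    induction L with
    | nil => intro a ha; cases ha
    | cons b L ih =>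
        intro a ha
        rcases List.mem_cons.mp ha with h | h
        · subst h; exact le_max_left _ _
        · exact le_trans (ih a h) (le_max_right _ _)
  -- the step existential
  have hstepex : ∀ l : List (↥c0p × Finset ℕ × ℕ × ℕ),
      ∃ d : ↥c0p × Finset ℕ × ℕ × ℕ,
        (∀ q ∈ l, ∀ s, d.2.2.2 ≤ s → |((T q.1 : ↥c0p) : ℕ → ℝ) s| ≤ ε * (4:ℝ)⁻¹ ^ l.length) ∧
        (∀ q ∈ l, q.2.2.1 < d.2.2.2) ∧
        (∀ s, s ∉ d.2.1 → ((d.1 : ↥c0p) : ℕ → ℝ) s = 0) ∧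
        (∀ s, |((d.1 : ↥c0p) : ℕ → ℝ) s| ≤ 1) ∧
        (∀ q ∈ l, ∀ s, ((d.1 : ↥c0p) : ℕ → ℝ) s ≠ 0 → (q.2.1.sup id) < s) ∧
        (∀ s, ((d.1 : ↥c0p) : ℕ → ℝ) s ≠ 0 → l.length ≤ s) ∧
        (∀ s, s < d.2.2.2 → ((T d.1 : ↥c0p) : ℕ → ℝ) s = 0) ∧
        (ε ≤ |((T d.1 : ↥c0p) : ℕ → ℝ) d.2.2.1|) ∧
        (d.2.2.2 ≤ d.2.2.1) := by
    intro l
    obtain ⟨Mv0, hMv0⟩ := hthr l (ε * (4:ℝ)⁻¹ ^ l.length) (by positivity)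
    set Mv : ℕ := max Mv0 ((l.map (fun q => q.2.2.1 + 1)).foldr max 0) with hMv
    have hMvt : ∀ q ∈ l, q.2.2.1 < Mv := by
      intro q hq
      have h1 : q.2.2.1 + 1 ≤ (l.map (fun q => q.2.2.1 + 1)).foldr max 0 :=
        hfold _ _ (List.mem_map_of_mem (f := fun q => q.2.2.1 + 1) hq)
      have h2 := le_max_right Mv0 ((l.map (fun q => q.2.2.1 + 1)).foldr max 0)
      omega
    set bigF : Finset ℕ :=
      (l.foldr (fun q acc => q.2.1 ∪ acc) ∅) ∪ (Finset.range Mv).biUnion F with hbigF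
    have hbig1 : ∀ q ∈ l, q.2.1 ⊆ bigF := by
      have haux : ∀ (l' : List (↥c0p × Finset ℕ × ℕ × ℕ)) (q : ↥c0p × Finset ℕ × ℕ × ℕ),
          q ∈ l' → q.2.1 ⊆ l'.foldr (fun q acc => q.2.1 ∪ acc) ∅ := by
        intro l'
        induction l' with
        | nil => intro q hq; cases hq
        | cons p l' ih =>
            intro q hq
            rcases List.mem_cons.mp hq with h | h
            · subst h; exact Finset.subset_union_left
            · exact (ih q h).trans Finset.subset_union_right
      intro q hq
      exact (haux l q hq).trans Finset.subset_union_left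
    have hbig2 : ∀ s, s < Mv → F s ⊆ bigF := by
      intro s hs
      refine Finset.Subset.trans ?_ Finset.subset_union_right
      intro u hu
      exact Finset.mem_biUnion.mpr ⟨s, Finset.mem_range.mpr hs, hu⟩
    set NB : ℕ := max (bigF.sup id + 1) l.length with hNB
    obtain ⟨z, ⟨D, hD⟩, hfar, hunit, t0, ht0⟩ := hT NB
    have hzbig : ∀ s ∈ bigF, (z : ℕ → ℝ) s = 0 := by
      intro s hs
      apply hfar
      have h1 : s ≤ bigF.sup id := Finset.le_sup (f := id) hs
      have h2 := le_max_left (bigF.sup id + 1) l.length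
      omega
    have hTz0 : ∀ s, s < Mv → ((T z : ↥c0p) : ℕ → ℝ) s = 0 := by
      intro s hs
      apply hF
      intro u hu
      exact hzbig u (hbig2 s hs hu)
    have ht0M : Mv ≤ t0 := by
      by_contra h
      push_neg at h
      rw [hTz0 t0 h] at ht0
      rw [abs_zero] at ht0
      linarith
    have hzfar : ∀ s, (z : ℕ → ℝ) s ≠ 0 → NB ≤ s := by
      intro s hs
      by_contra h
      push_neg at h
      exact hs (hfar s h)
    refine ⟨(z, D, t0, Mv), ?_, ?_, ?_, ?_, ?_, ?_, ?_, ?_, ?_⟩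
    · intro q hq s hs
      exact hMv0 q hq s (le_trans (le_max_left _ _) hs)
    · exact hMvt
    · exact hD
    · exact hunit
    · intro q hq s hs
      have h1 : q.2.1.sup id ≤ bigF.sup id := Finset.sup_mono (hbig1 q hq)
      have h2 := hzfar s hs
      have h3 := le_max_left (bigF.sup id + 1) l.length
      omega
    · intro s hs
      have h2 := hzfar s hs
      have h3 := le_max_right (bigF.sup id + 1) l.length
      omega
    · exact hTz0
    · exact ht0
    · exact ht0M
  choose nextd hnext using hstepex
  -- the recursion
  let st : ℕ → List (↥c0p × Finset ℕ × ℕ × ℕ) :=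
    fun n => Nat.rec [] (fun _ l => l ++ [nextd l]) n
  have st_succ : ∀ n, st (n + 1) = st n ++ [nextd (st n)] := fun n => rfl
  let pr : ℕ → ↥c0p × Finset ℕ × ℕ × ℕ := fun j => nextd (st j)
  have st_eq : ∀ n, st n = (List.range n).map pr := by
    intro n
    induction n with
    | zero => rfl
    | succ n ih => rw [st_succ, List.range_succ, List.map_append, ← ih]; rfl
  have hlen : ∀ n, (st n).length = n := by
    intro n
    rw [st_eq]
    simp
  have hmem_st : ∀ j n, j < n → pr j ∈ st n := by
    intro j n hj
    rw [st_eq]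
    exact List.mem_map_of_mem (f := pr) (List.mem_range.mpr hj)
  set zf : ℕ → ↥c0p := fun j => (pr j).1 with hzf
  set Df : ℕ → Finset ℕ := fun j => (pr j).2.1 with hDf
  set tf : ℕ → ℕ := fun j => (pr j).2.2.1 with htf
  set Mf : ℕ → ℕ := fun j => (pr j).2.2.2 with hMf
  set wv : ℕ → ↥c0p := fun j => T (zf j) with hwv
  -- extract the nine clauses
  have hA : ∀ m j, m < j → ∀ s, Mf j ≤ s →
      |((wv m : ↥c0p) : ℕ → ℝ) s| ≤ ε * (4:ℝ)⁻¹ ^ j := by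
    intro m j hmj s hs
    have h := (hnext (st j)).1 (pr m) (hmem_st m j hmj) s hs
    rwa [hlen] at h
  have hB : ∀ m j, m < j → tf m < Mf j :=
    fun m j hmj => (hnext (st j)).2.1 (pr m) (hmem_st m j hmj)
  have hsupp : ∀ j s, s ∉ Df j → ((zf j : ↥c0p) : ℕ → ℝ) s = 0 :=
    fun j => (hnext (st j)).2.2.1
  have hunit : ∀ j s, |((zf j : ↥c0p) : ℕ → ℝ) s| ≤ 1 :=
    fun j => (hnext (st j)).2.2.2.1
  have hbeyond : ∀ m j, m < j → ∀ s, ((zf j : ↥c0p) : ℕ → ℝ) s ≠ 0 → (Df m).sup id < s :=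
    fun m j hmj => (hnext (st j)).2.2.2.2.1 (pr m) (hmem_st m j hmj)
  have hge : ∀ j s, ((zf j : ↥c0p) : ℕ → ℝ) s ≠ 0 → j ≤ s := by
    intro j s hs
    have h := (hnext (st j)).2.2.2.2.2.1 s hs
    rwa [hlen] at h
  have hvanM : ∀ j s, s < Mf j → ((wv j : ↥c0p) : ℕ → ℝ) s = 0 :=
    fun j => (hnext (st j)).2.2.2.2.2.2.1
  have hdiagbig : ∀ j, ε ≤ |((wv j : ↥c0p) : ℕ → ℝ) (tf j)| :=
    fun j => (hnext (st j)).2.2.2.2.2.2.2.1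
  have hMt : ∀ j, Mf j ≤ tf j :=
    fun j => (hnext (st j)).2.2.2.2.2.2.2.2
  -- consequences
  have hdisj : ∀ m j s, m < j → ((zf m : ↥c0p) : ℕ → ℝ) s ≠ 0 →
      ((zf j : ↥c0p) : ℕ → ℝ) s = 0 := by
    intro m j s hmj hm
    by_contra hj
    have h1 : s ∈ Df m := by
      by_contra hs
      exact hm (hsupp m s hs)
    have h2 : s ≤ (Df m).sup id := Finset.le_sup (f := id) h1
    have h3 := hbeyond m j hmj s hj
    omega
  have htmono : ∀ m j, m < j → tf m < tf j :=
    fun m j hmj => lt_of_lt_of_le (hB m j hmj) (hMt j)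
  have htsm : StrictMono tf := fun m j hmj => htmono m j hmj
  have hwne : ∀ j, ((wv j : ↥c0p) : ℕ → ℝ) (tf j) ≠ 0 := by
    intro j
    intro h
    have := hdiagbig j
    rw [h, abs_zero] at this
    linarith
  have hwlater : ∀ m j, j < m → ((wv m : ↥c0p) : ℕ → ℝ) (tf j) = 0 :=
    fun m j hjm => hvanM m (tf j) (hB j m hjm)
  -- matrix entries
  set Sjm : ℕ → ℕ → ℝ :=
    fun j m => ((wv m : ↥c0p) : ℕ → ℝ) (tf j) / ((wv j : ↥c0p) : ℕ → ℝ) (tf j) with hSjm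
  have hSbound : ∀ j m, m < j → |Sjm j m| ≤ (4:ℝ)⁻¹ ^ j := by
    intro j m hmj
    rw [hSjm]
    rw [abs_div]
    have h1 : |((wv m : ↥c0p) : ℕ → ℝ) (tf j)| ≤ ε * (4:ℝ)⁻¹ ^ j :=
      hA m j hmj (tf j) (hMt j)
    have h2 : ε ≤ |((wv j : ↥c0p) : ℕ → ℝ) (tf j)| := hdiagbig j
    calc |((wv m : ↥c0p) : ℕ → ℝ) (tf j)| / |((wv j : ↥c0p) : ℕ → ℝ) (tf j)|
        ≤ (ε * (4:ℝ)⁻¹ ^ j) / ε := by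
          apply div_le_div₀ (by positivity) h1 hε h2
      _ = (4:ℝ)⁻¹ ^ j := by
          rw [mul_comm, mul_div_assoc, div_self (ne_of_gt hε), mul_one]
  -- the W operator
  set Wop : ↥c0p →L[ℝ] ↥c0p := mkToC0
    { toFun := fun x => fun s => ∑ m ∈ Finset.range (s+1),
        (x : ℕ → ℝ) m * ((zf m : ↥c0p) : ℕ → ℝ) s
      map_add' := by
        intro x y
        funext s
        simp only [Submodule.coe_add, Pi.add_apply, add_mul]
        rw [Finset.sum_add_distrib]
      map_smul' := by
        intro c x
        funext s
        simp only [Submodule.coe_smul, Pi.smul_apply, smul_eq_mul, RingHom.id_apply]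
        rw [Finset.mul_sum]
        apply Finset.sum_congr rfl
        intro m _
        ring }
    (by
      intro s
      show Continuous fun v : ↥c0p => ∑ m ∈ Finset.range (s+1),
        (v : ℕ → ℝ) m * ((zf m : ↥c0p) : ℕ → ℝ) s
      apply continuous_finset_sum
      intro m _
      exact (((continuous_apply m).comp continuous_subtype_val).mul continuous_const))
    (by
      intro x
      show Tendsto (fun s => ∑ m ∈ Finset.range (s+1),
        (x : ℕ → ℝ) m * ((zf m : ↥c0p) : ℕ → ℝ) s) atTop (𝓝 0)
      rw [Metric.tendsto_atTop]
      intro ε' hε'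
      obtain ⟨Mx, hMx⟩ := c0_eventually_le x (show (0:ℝ) < ε'/2 by linarith)
      set T₀ : ℕ := ((Finset.range Mx).sup fun m => (Df m).sup id) + 1 with hT₀
      refine ⟨T₀, fun s hs => ?_⟩
      rw [Real.dist_eq, sub_zero]
      have hbound : |∑ m ∈ Finset.range (s+1),
          (x : ℕ → ℝ) m * ((zf m : ↥c0p) : ℕ → ℝ) s| ≤ ε'/2 := by
        by_cases hex : ∃ m ∈ Finset.range (s+1), ((zf m : ↥c0p) : ℕ → ℝ) s ≠ 0
        · obtain ⟨m₀, hm₀mem, hm₀⟩ := hex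
          rw [Finset.sum_eq_single_of_mem m₀ hm₀mem ?_]
          · have hm₀Mx : Mx ≤ m₀ := by
              by_contra hlt
              push_neg at hlt
              have h1 : s ∈ Df m₀ := by
                by_contra hns
                exact hm₀ (hsupp m₀ s hns)
              have h2 : s ≤ (Df m₀).sup id := Finset.le_sup (f := id) h1
              have h3 : (Df m₀).sup id ≤ (Finset.range Mx).sup fun m => (Df m).sup id :=
                Finset.le_sup (f := fun m => (Df m).sup id) (Finset.mem_range.mpr hlt)
              omega
            rw [abs_mul]
            calc |(x : ℕ → ℝ) m₀| * |((zf m₀ : ↥c0p) : ℕ → ℝ) s|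
                ≤ (ε'/2) * 1 :=
                  mul_le_mul (hMx m₀ hm₀Mx) (hunit m₀ s) (abs_nonneg _) (by linarith)
              _ = ε'/2 := by ring
          · intro b _ hbne
            rcases lt_or_gt_of_ne hbne with hlt | hgt
            · have hzb : ((zf b : ↥c0p) : ℕ → ℝ) s = 0 := by
                by_contra hzb
                exact hm₀ (hdisj b m₀ s hlt hzb)
              rw [hzb, mul_zero]
            · rw [hdisj m₀ b s hgt hm₀, mul_zero]
        · push_neg at hex
          rw [Finset.sum_eq_zero fun m hm => by rw [hex m hm, mul_zero]]
          rw [abs_zero]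
          linarith
      calc |∑ m ∈ Finset.range (s+1), (x : ℕ → ℝ) m * ((zf m : ↥c0p) : ℕ → ℝ) s|
          ≤ ε'/2 := hbound
        _ < ε' := by linarith)
    with hWop
  have hW_apply : ∀ (x : ↥c0p) (s : ℕ), ((Wop x : ↥c0p) : ℕ → ℝ) s
      = ∑ m ∈ Finset.range (s+1), (x : ℕ → ℝ) m * ((zf m : ↥c0p) : ℕ → ℝ) s :=
    fun x s => rfl
  -- the key pointwise-limit computation
  have hTW : ∀ (x : ↥c0p) (j : ℕ), ((T (Wop x) : ↥c0p) : ℕ → ℝ) (tf j)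
      = ∑ m ∈ Finset.range (j+1), (x : ℕ → ℝ) m * ((wv m : ↥c0p) : ℕ → ℝ) (tf j) := by
    intro x j
    set Pn : ℕ → ↥c0p := fun n => ∑ m ∈ Finset.range n, ((x : ℕ → ℝ) m) • zf m with hPn
    have hPncoord : ∀ n s, ((Pn n : ↥c0p) : ℕ → ℝ) s
        = ∑ m ∈ Finset.range n, (x : ℕ → ℝ) m * ((zf m : ↥c0p) : ℕ → ℝ) s := by
      intro n s
      rw [hPn]
      rw [coe_finset_sum_apply]
      apply Finset.sum_congr rfl
      intro m _
      rw [Submodule.coe_smul, Pi.smul_apply, smul_eq_mul]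
    have hPlim : Tendsto Pn atTop (𝓝 (Wop x)) := by
      rw [Topology.IsInducing.subtypeVal.tendsto_nhds_iff]
      rw [tendsto_pi_nhds]
      intro s
      apply Filter.Tendsto.congr'
        (f₁ := fun _ : ℕ => ((Wop x : ↥c0p) : ℕ → ℝ) s)
      · filter_upwards [Filter.eventually_ge_atTop (s+1)] with n hn
        show ((Wop x : ↥c0p) : ℕ → ℝ) s = ((Pn n : ↥c0p) : ℕ → ℝ) s
        rw [hPncoord, hW_apply]
        apply Finset.sum_subset (Finset.range_subset_range.mpr hn)
        intro m _ hm
        have hms : s < m := by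
          have hc : ¬ m < s + 1 := fun hc => hm (Finset.mem_range.mpr hc)
          omega
        have hz : ((zf m : ↥c0p) : ℕ → ℝ) s = 0 := by
          by_contra hz
          have := hge m s hz
          omega
        rw [hz, mul_zero]
      · exact tendsto_const_nhds
    have hTlim : Tendsto (fun n => T (Pn n)) atTop (𝓝 (T (Wop x))) :=
      (T.continuous.tendsto _).comp hPlim
    have hcoordlim : Tendsto (fun n => ((T (Pn n) : ↥c0p) : ℕ → ℝ) (tf j)) atTop
        (𝓝 (((T (Wop x) : ↥c0p) : ℕ → ℝ) (tf j))) :=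
      ((((continuous_apply (tf j)).comp continuous_subtype_val)).tendsto _).comp hTlim
    have hTPn : ∀ n, ((T (Pn n) : ↥c0p) : ℕ → ℝ) (tf j)
        = ∑ m ∈ Finset.range n, (x : ℕ → ℝ) m * ((wv m : ↥c0p) : ℕ → ℝ) (tf j) := by
      intro n
      rw [hPn, map_sum]
      rw [coe_finset_sum_apply]
      apply Finset.sum_congr rfl
      intro m _
      rw [map_smul, Submodule.coe_smul, Pi.smul_apply, smul_eq_mul]
    have hconstlim : Tendsto (fun n => ((T (Pn n) : ↥c0p) : ℕ → ℝ) (tf j)) atTop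
        (𝓝 (∑ m ∈ Finset.range (j+1), (x : ℕ → ℝ) m * ((wv m : ↥c0p) : ℕ → ℝ) (tf j))) := by
      apply Filter.Tendsto.congr'
        (f₁ := fun _ : ℕ => ∑ m ∈ Finset.range (j+1),
          (x : ℕ → ℝ) m * ((wv m : ↥c0p) : ℕ → ℝ) (tf j))
      · filter_upwards [Filter.eventually_ge_atTop (j+1)] with n hn
        rw [hTPn]
        apply Finset.sum_subset (Finset.range_subset_range.mpr hn)
        intro m _ hm
        have hjm : j < m := by
          have hc : ¬ m < j + 1 := fun hc => hm (Finset.mem_range.mpr hc)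
          omega
        rw [hwlater m j hjm, mul_zero]
      · exact tendsto_const_nhds
    exact tendsto_nhds_unique hcoordlim hconstlim
  -- the V operator
  set Vop : ↥c0p →L[ℝ] ↥c0p := mkToC0
    { toFun := fun y => fun j => (y : ℕ → ℝ) (tf j) / ((wv j : ↥c0p) : ℕ → ℝ) (tf j)
      map_add' := by
        intro y y'
        funext j
        simp only [Submodule.coe_add, Pi.add_apply]
        rw [add_div]
      map_smul' := by
        intro c y
        funext j
        simp only [Submodule.coe_smul, Pi.smul_apply, smul_eq_mul, RingHom.id_apply]
        rw [mul_div_assoc] }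
    (by
      intro j
      show Continuous fun y : ↥c0p => (y : ℕ → ℝ) (tf j) / ((wv j : ↥c0p) : ℕ → ℝ) (tf j)
      exact ((continuous_apply (tf j)).comp continuous_subtype_val).div_const _)
    (by
      intro y
      show Tendsto (fun j => (y : ℕ → ℝ) (tf j) / ((wv j : ↥c0p) : ℕ → ℝ) (tf j)) atTop (𝓝 0)
      rw [Metric.tendsto_atTop]
      intro ε' hε'
      obtain ⟨N, hN⟩ := c0_eventually_le y (show (0:ℝ) < ε'/2 * ε by positivity)
      refine ⟨N, fun j hj => ?_⟩
      rw [Real.dist_eq, sub_zero]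
      have htfj : N ≤ tf j := le_trans hj (htsm.le_apply)
      have h1 : |(y : ℕ → ℝ) (tf j)| ≤ ε'/2 * ε := hN (tf j) htfj
      have h2 : ε ≤ |((wv j : ↥c0p) : ℕ → ℝ) (tf j)| := hdiagbig j
      have h3 : |(y : ℕ → ℝ) (tf j) / ((wv j : ↥c0p) : ℕ → ℝ) (tf j)| ≤ ε'/2 := by
        rw [abs_div]
        calc |(y : ℕ → ℝ) (tf j)| / |((wv j : ↥c0p) : ℕ → ℝ) (tf j)|
            ≤ (ε'/2 * ε) / ε := div_le_div₀ (by positivity) h1 hε h2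
          _ = ε'/2 := by
              rw [mul_div_assoc, div_self (ne_of_gt hε), mul_one]
      calc |(y : ℕ → ℝ) (tf j) / ((wv j : ↥c0p) : ℕ → ℝ) (tf j)| ≤ ε'/2 := h3
        _ < ε' := by linarith)
    with hVop
  have hV_apply : ∀ (y : ↥c0p) (j : ℕ), ((Vop y : ↥c0p) : ℕ → ℝ) j
      = (y : ℕ → ℝ) (tf j) / ((wv j : ↥c0p) : ℕ → ℝ) (tf j) := fun y j => rfl
  -- the composite has the unitriangular form
  have hVTW : ∀ (x : ↥c0p) (j : ℕ),
      ((Vop (T (Wop x)) : ↥c0p) : ℕ → ℝ) j = Gapp Sjm (x : ℕ → ℝ) j := by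
    intro x j
    rw [hV_apply, hTW, Gapp]
    rw [Finset.sum_range_succ, add_div, Finset.sum_div]
    have h1 : (x : ℕ → ℝ) j * ((wv j : ↥c0p) : ℕ → ℝ) (tf j) / ((wv j : ↥c0p) : ℕ → ℝ) (tf j)
        = (x : ℕ → ℝ) j := by
      rw [mul_div_assoc, div_self (hwne j), mul_one]
    have h2 : ∑ m ∈ Finset.range j,
        (x : ℕ → ℝ) m * ((wv m : ↥c0p) : ℕ → ℝ) (tf j) / ((wv j : ↥c0p) : ℕ → ℝ) (tf j)
        = ∑ m ∈ Finset.range j, Sjm j m * (x : ℕ → ℝ) m := by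
      apply Finset.sum_congr rfl
      intro m _
      rw [hSjm, mul_div_assoc]
      ring
    rw [h1, h2, add_comm]
  -- the H operator
  have hHcont : ∀ j, Continuous fun v : ↥c0p => Hc Sjm (v : ℕ → ℝ) j := by
    intro j
    induction j using Nat.strong_induction_on with
    | _ j ih =>
      have heq : (fun v : ↥c0p => Hc Sjm (v : ℕ → ℝ) j)
          = fun v : ↥c0p => (v : ℕ → ℝ) j
            - ∑ m ∈ Finset.range j, Sjm j m * Hc Sjm (v : ℕ → ℝ) m := by
        funext v
        rw [Hc_eq]
      rw [heq]
      apply Continuous.sub ((continuous_apply j).comp continuous_subtype_val)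
      apply continuous_finset_sum
      intro m hm
      exact continuous_const.mul (ih m (Finset.mem_range.mp hm))
  set Hop : ↥c0p →L[ℝ] ↥c0p := mkToC0
    { toFun := fun v => Hc Sjm (v : ℕ → ℝ)
      map_add' := by
        intro v v'
        funext j
        exact Hc_add Sjm (v : ℕ → ℝ) (v' : ℕ → ℝ) j
      map_smul' := by
        intro c v
        funext j
        exact Hc_smul Sjm c (v : ℕ → ℝ) j }
    (by
      intro j
      show Continuous fun v : ↥c0p => Hc Sjm (v : ℕ → ℝ) j
      exact hHcont j)
    (by
      intro v
      show Tendsto (Hc Sjm (v : ℕ → ℝ)) atTop (𝓝 0)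
      exact Hc_c0 (fun j m h => hSbound j m h) v.2)
    with hHop
  refine ⟨Hop.comp Vop, Wop, fun x => ?_⟩
  apply Subtype.ext
  funext j
  show Hc Sjm ((Vop (T (Wop x)) : ↥c0p) : ℕ → ℝ) j = (x : ℕ → ℝ) j
  have hfun : ((Vop (T (Wop x)) : ↥c0p) : ℕ → ℝ) = fun j' => Gapp Sjm (x : ℕ → ℝ) j' :=
    funext fun j' => hVTW x j'
  rw [hfun]
  exact Hc_Gapp Sjm _ j

end Blocks

section Final

/-- The hard direction: if `(c₀)_p` factors through a power of `M`, it factors through `M`. -/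
theorem factors_of_factors_pi {ι M : Type*} [TopologicalSpace M] [AddCommGroup M] [Module ℝ M]
    (h : FactorsC0 (ι → M)) : FactorsC0 M := by
  obtain ⟨R, J, hRJ⟩ := h
  obtain ⟨A, Bm, ε, hε, hfb⟩ := exists_farBig_coordinate R J hRJ
  obtain ⟨V, W, hVW⟩ := factor_of_farBig hε hfb
  exact ⟨V.comp A, Bm.comp W, fun x => hVW x⟩

end Final

/-- Let `X` be an infinite Tychonoff space and `κ` an infinite cardinal,
realized as an infinite index type `ι`.  The product space `C_p(X)^κ` (with the product
topology) contains a complemented copy of `(c₀)_p` if and only if `C_p(X)` does. -/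
theorem statement14 (X : Type*) [TopologicalSpace X] [T35Space X] [Infinite X]
    (ι : Type*) [Infinite ι] :
    HasComplementedCopy (ι → ↥(Cp X ℝ)) ↥c0p ↔ HasComplementedCopy ↥(Cp X ℝ) ↥c0p := by
  constructor
  · intro h
    exact hasComplementedCopy_of_factors
      (factors_of_factors_pi (factors_of_hasComplementedCopy h))
  · intro h
    exact hasComplementedCopy_of_factors
      (factors_pi_of_factors (factors_of_hasComplementedCopy h))
end
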